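/- arXiv:2107.09421 — 11 statements merged into one kernel-verified Lean document; each statement's English description precedes it below -/
import Mathlib

section
/- For any word w and any position p of w, a repetition word of w at p whose length equals the minimal local period per(w,p) is unique, and it is unbordered. -/
namespace CritFact

/-- A word is square-free if it contains no factor `v ++ v` with `v` nonempty. -/
def SqFree {α : Type*} (w : List α) : Prop :=
  ∀ v : List α, v ≠ [] → ¬ (v ++ v) <:+: w

/-- A position in `w` is an integer `p` with `1 ≤ p < |w|`. -/
def IsPos {α : Type*} (w : List α) (p : ℕ) : Prop :=
  1 ≤ p ∧ p < w.length

/-- `u` is a repetition word of `w` at position `p` (with `w = x ++ y`, `|x| = p`):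
`u` is nonempty, one of `u`, `x` is a suffix of the other, and one of `u`, `y` is a
prefix of the other. -/
def IsRepWord {α : Type*} (w : List α) (p : ℕ) (u : List α) : Prop :=
  u ≠ [] ∧ (u <:+ w.take p ∨ w.take p <:+ u) ∧ (u <+: w.drop p ∨ w.drop p <+: u)

/-- The minimal local period of `w` at position `p`. -/
noncomputable def locPer {α : Type*} (w : List α) (p : ℕ) : ℕ :=
  sInf {n | ∃ u : List α, IsRepWord w p u ∧ u.length = n}

/-- `q` is a period of `w` if `q > 0` and `w[i] = w[i+q]` whenever both are defined. -/
def HasPeriod {α : Type*} (w : List α) (q : ℕ) : Prop :=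
  0 < q ∧ ∀ i : ℕ, i + q < w.length → w[i]? = w[i + q]?

/-- The minimal period of `w`. -/
noncomputable def per {α : Type*} (w : List α) : ℕ :=
  sInf {q | HasPeriod w q}

/-- A position `p` of `w` is critical if the minimal local period at `p` equals
the global period of `w`. -/
def IsCritical {α : Type*} (w : List α) (p : ℕ) : Prop :=
  IsPos w p ∧ locPer w p = per w

open Classical in
/-- `eta w` is the number of critical positions of `w`. -/
noncomputable def eta {α : Type*} (w : List α) : ℕ :=
  ((Finset.Ico 1 w.length).filter (fun p => IsCritical w p)).card

/-- A word is unbordered if no nonempty proper prefix is also a suffix. -/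
def Unbordered {α : Type*} (w : List α) : Prop :=
  ∀ v : List α, v ≠ [] → v ≠ w → ¬ (v <+: w ∧ v <:+ w)

/-- Ternary words. -/
abbrev Word := List (Fin 3)

/-- Thue's morphism `τ(0) = 012`, `τ(1) = 02`, `τ(2) = 1`. -/
def tau (a : Fin 3) : Word :=
  if a = 0 then [0, 1, 2] else if a = 1 then [0, 2] else [1]

/-- The morphism `τ` applied to a word. -/
def tauW (w : Word) : Word := (w.map tau).flatten

/-- The infinite fixed point `m = 012021012102012⋯` of `τ` starting with `0`. -/
def mInf (n : ℕ) : Fin 3 := (tauW^[n + 1] [0]).getD n 0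

/-- `u` is a (finite) factor of the infinite word `m`. -/
def FactorOfM (u : Word) : Prop :=
  ∃ i : ℕ, u = (List.range u.length).map (fun j => mInf (i + j))

/-- `u` is a factor of `m` occurring (starting) after position `i₀`. -/
def FactorOfMAfter (u : Word) (i₀ : ℕ) : Prop :=
  ∃ i : ℕ, i₀ ≤ i ∧ u = (List.range u.length).map (fun j => mInf (i + j))

/-- `mWord n = τ^{2n-1}(0) · τ^{2n-3}(0) ⋯ τ³(0) · τ(0)`. -/
def mWord : ℕ → Word
  | 0 => []
  | n + 1 => tauW^[2 * n + 1] [0] ++ mWord n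

/-- The word `w_x = 0x02x10x02x0`. -/
def wx (x : Word) : Word :=
  [0] ++ x ++ [0, 2] ++ x ++ [1, 0] ++ x ++ [0, 2] ++ x ++ [0]

end CritFact

/-- a repetition word of `w` at a position `p` whose length equals the
minimal local period `per(w,p)` is unique, and it is unbordered. -/
theorem min_rep_word_unique_and_unbordered {α : Type*} (w : List α) (p : ℕ)
    (hp : CritFact.IsPos w p) (u : List α)
    (hu : CritFact.IsRepWord w p u) (hlen : u.length = CritFact.locPer w p) :
    (∀ u' : List α, CritFact.IsRepWord w p u' → u'.length = CritFact.locPer w p → u' = u) ∧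
    CritFact.Unbordered u := by
  classical
  obtain ⟨hp1, hp2⟩ := hp
  set x := w.take p with hxdef
  set y := w.drop p with hydef
  have hxlen : x.length = p := by
    simp [hxdef, List.length_take]; omega
  have hylen : y.length = w.length - p := by simp [hydef]
  have hyne : y ≠ [] := by
    intro h
    have := congrArg List.length h
    simp [hylen] at this
    omega
  -- the canonical repetition word y ++ x
  have hyx : CritFact.IsRepWord w p (y ++ x) := by
    refine ⟨by simp [hyne], Or.inr ?_, Or.inr ?_⟩
    · exact List.suffix_append y x
    · exact List.prefix_append y x
  have hmem_yx : (y ++ x).length ∈ {n | ∃ u : List α, CritFact.IsRepWord w p u ∧ u.length = n} :=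
    ⟨y ++ x, hyx, rfl⟩
  have hle_yx : CritFact.locPer w p ≤ (y ++ x).length := Nat.sInf_le hmem_yx
  have hnxy : CritFact.locPer w p ≤ y.length + x.length := by
    simpa using hle_yx
  set n := CritFact.locPer w p with hndef
  -- characterization of a minimal-length repetition word
  have key : ∀ v : List α, CritFact.IsRepWord w p v → v.length = n →
      v = if n ≤ x.length then x.drop (x.length - n)
          else if n ≤ y.length then y.take n
          else y ++ x.drop (y.length - (n - x.length)) := by
    intro v hv hvlen
    obtain ⟨hvne, hv1, hv2⟩ := hv
    rw [← hxdef] at hv1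
    rw [← hydef] at hv2
    have hvl : v.length = n := hvlen
    by_cases h1 : n ≤ x.length
    · -- v is a suffix of x
      have hvx : v <:+ x := by
        rcases hv1 with h | h
        · exact h
        · have : x.length ≤ v.length := h.length_le
          have := h.eq_of_length (by omega)
          simp [this]
      rw [if_pos h1]
      rw [List.suffix_iff_eq_drop] at hvx
      rw [hvx, hvlen]
    · have hvx : x <:+ v := by
        rcases hv1 with h | h
        · exact absurd h.length_le (by omega)
        · exact h
      by_cases h2 : n ≤ y.length
      · have hvy : v <+: y := by
          rcases hv2 with h | h
          · exact h
          · have : y.length ≤ v.length := h.length_le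
            have := h.eq_of_length (by omega)
            simp [this]
        rw [if_neg h1, if_pos h2]
        rw [List.prefix_iff_eq_take] at hvy
        rw [hvy, hvlen]
      · have hvy : y <+: v := by
          rcases hv2 with h | h
          · exact absurd h.length_le (by omega)
          · exact h
        rw [if_neg h1, if_neg h2]
        have htake : v.take y.length = y := by
          rw [List.prefix_iff_eq_take] at hvy
          exact hvy.symm
        have hdropx : v.drop (v.length - x.length) = x := by
          rw [List.suffix_iff_eq_drop] at hvx
          exact hvx.symm
        have hdrop : v.drop y.length = x.drop (y.length - (n - x.length)) := by
          have h3 : (v.length - x.length) + (y.length - (n - x.length)) = y.length := by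
            omega
          calc v.drop y.length
              = (v.drop (v.length - x.length)).drop (y.length - (n - x.length)) := by
                rw [List.drop_drop, h3]
            _ = x.drop (y.length - (n - x.length)) := by rw [hdropx]
        calc v = v.take y.length ++ v.drop y.length := (List.take_append_drop _ _).symm
          _ = y ++ x.drop (y.length - (n - x.length)) := by rw [htake, hdrop]
  constructor
  · intro u' hu' hlen'
    rw [key u' hu' hlen', key u hu hlen]
  · -- unbordered
    intro v hvne hvneu ⟨hpref, hsuf⟩
    have hvlt : v.length < n := by
      have hvle := hpref.length_le
      rcases Nat.lt_or_ge v.length u.length with h | h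
      · omega
      · exact absurd (hpref.eq_of_length (by omega)) hvneu
    have hvrep : CritFact.IsRepWord w p v := by
      obtain ⟨_, hu1, hu2⟩ := hu
      rw [← hxdef] at hu1
      rw [← hydef] at hu2
      refine ⟨hvne, ?_, ?_⟩
      · rcases hu1 with h | h
        · exact Or.inl (hsuf.trans h)
        · exact List.suffix_or_suffix_of_suffix hsuf h
      · rcases hu2 with h | h
        · exact Or.inl (hpref.trans h)
        · exact List.prefix_or_prefix_of_prefix hpref h
    have : n ≤ v.length := Nat.sInf_le ⟨v, hvrep, rfl⟩
    omega
end

section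
/- Let w = xy with |x| = p a position of w, and let u be a repetition word of w at p with |u| = per(w,p). If u has both left overflow (|u| > |x|) and right overflow (|u| > |y|) at p, then p is a critical point of w. -/
theorem CritFact.period_shift {α : Type*} {w : List α} {q : ℕ} (hq : CritFact.HasPeriod w q)
    {i m : ℕ} (h : i + q + m ≤ w.length) :
    (w.drop i).take m = (w.drop (i + q)).take m := by
  apply List.ext_getElem?
  intro j
  rw [List.getElem?_take, List.getElem?_take]
  split_ifs with hj
  · rw [List.getElem?_drop, List.getElem?_drop]
    have := hq.2 (i + j) (by omega)
    rw [this]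
    congr 1
    omega
  · rfl

/-- if a minimal repetition word `u` of `w = x ++ y` at `p = |x|` has both
left overflow (`|u| > |x|`) and right overflow (`|u| > |y|`), then `p` is critical. -/
theorem both_overflows_imply_critical {α : Type*} (x y u : List α)
    (hp : CritFact.IsPos (x ++ y) x.length)
    (hu : CritFact.IsRepWord (x ++ y) x.length u)
    (hmin : u.length = CritFact.locPer (x ++ y) x.length)
    (hleft : u.length > x.length)
    (hright : u.length > y.length) :
    CritFact.IsCritical (x ++ y) x.length := by
  classical
  obtain ⟨hune, hsuf, hpre⟩ := hu
  obtain ⟨hp1, hp2⟩ := hp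
  set w := x ++ y with hw
  have hlen : w.length = x.length + y.length := List.length_append
  have htake : w.take x.length = x := List.take_left
  have hdrop : w.drop x.length = y := List.drop_left
  rw [htake] at hsuf
  rw [hdrop] at hpre
  have hx : x <:+ u := by
    rcases hsuf with h | h
    · exact absurd h.length_le (by omega)
    · exact h
  have hy : y <+: u := by
    rcases hpre with h | h
    · exact absurd h.length_le (by omega)
    · exact h
  obtain ⟨a, ha⟩ := hx
  obtain ⟨b, hb⟩ := hy
  have hal : a.length + x.length = u.length := by
    rw [← ha]; simp
  have hbl : y.length + b.length = u.length := by
    rw [← hb]; simp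
  have hpn : CritFact.HasPeriod w u.length := by
    refine ⟨List.length_pos_iff.mpr hune, fun i hi => ?_⟩
    have hip : i < x.length := by omega
    have h1 : w[i]? = x[i]? := by
      rw [hw, List.getElem?_append, if_pos hip]
    have h2 : w[i + u.length]? = y[i + u.length - x.length]? := by
      rw [hw, List.getElem?_append_right (by omega)]
    have h3 : x[i]? = u[a.length + i]? := by
      rw [← ha, List.getElem?_append_right (Nat.le_add_right _ _),
        Nat.add_sub_cancel_left]
    have h4 : y[i + u.length - x.length]? = u[i + u.length - x.length]? := by
      set j := i + u.length - x.length with hj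
      rw [← hb, List.getElem?_append, if_pos (by omega)]
    rw [h1, h2, h3, h4]
    congr 1
    omega
  have hper_le : CritFact.per w ≤ u.length := by
    exact Nat.sInf_le hpn
  have hqmem : CritFact.HasPeriod w (CritFact.per w) := by
    exact Nat.sInf_mem (s := {q : ℕ | CritFact.HasPeriod w q}) ⟨u.length, hpn⟩
  set q := CritFact.per w with hqdef
  have hq0 : 0 < q := hqmem.1
  have hqle : q ≤ w.length := by
    refine Nat.sInf_le ?_
    exact ⟨by omega, fun i hi => absurd hi (by omega)⟩
  have key : ∀ i m : ℕ, i + q + m ≤ w.length →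
      (w.drop i).take m = (w.drop (i + q)).take m :=
    fun i m h => CritFact.period_shift hqmem h
  set P := x.length with hP
  set Y := y.length with hY
  have hrep : ∃ v : List α, CritFact.IsRepWord w P v ∧ v.length = q := by
    rcases le_or_gt q Y with hqy | hqy
    · -- q ≤ |y| : take v = y.take q
      have hvl : (y.take q).length = q := by rw [List.length_take]; omega
      refine ⟨y.take q, ⟨List.ne_nil_of_length_pos (by omega), ?_, Or.inl ?_⟩, hvl⟩
      · rcases le_or_gt q P with hqx | hqx
        · -- y.take q is a suffix of x
          left
          have e : x.drop (P - q) = y.take q := by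
            rw [← htake, ← hdrop, List.drop_take,
              show P - (P - q) = q from by omega,
              key (P - q) q (by omega), show P - q + q = P from by omega]
          have hsfx := List.drop_suffix (P - q) x
          rw [e] at hsfx
          rw [htake]
          exact hsfx
        · -- x is a suffix of y.take q
          right
          have h0 := key 0 P (by omega)
          rw [List.drop_zero, Nat.zero_add] at h0
          have e : (y.take q).drop (q - P) = x := by
            rw [← hdrop, List.drop_take, List.drop_drop,
              show P + (q - P) = q from by omega,
              show q - (q - P) = P from by omega, ← h0, htake]
          have hsfx := List.drop_suffix (q - P) (y.take q)
          rw [e] at hsfx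
          rw [htake]
          exact hsfx
      · -- y.take q is a prefix of y
        rw [hdrop]
        exact List.take_prefix _ _
    · rcases le_or_gt q P with hqx | hqx
      · -- |y| < q ≤ |x| : take v = x.drop (P - q)
        have hvl : (x.drop (P - q)).length = q := by
          rw [List.length_drop]; omega
        refine ⟨x.drop (P - q),
          ⟨List.ne_nil_of_length_pos (by omega), Or.inl ?_, Or.inr ?_⟩, hvl⟩
        · rw [htake]
          exact List.drop_suffix _ _
        · have e : (x.drop (P - q)).take Y = y := by
            rw [← htake, List.drop_take, show P - (P - q) = q from by omega,
              List.take_take, show Y ⊓ q = Y from by omega,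
              key (P - q) Y (by omega), show P - q + q = P from by omega,
              hdrop, hY, List.take_length]
          have hpfx := List.take_prefix Y (x.drop (P - q))
          rw [e] at hpfx
          rw [hdrop]
          exact hpfx
      · -- q > |x| and q > |y| : take v = y ++ x.drop (P + Y - q)
        have hvl : (y ++ x.drop (P + Y - q)).length = q := by
          rw [List.length_append, List.length_drop]; omega
        refine ⟨y ++ x.drop (P + Y - q),
          ⟨List.ne_nil_of_length_pos (by omega), Or.inr ?_, Or.inr ?_⟩, hvl⟩
        · -- x is a suffix
          have h0 := key 0 (P + Y - q) (by omega)
          rw [List.drop_zero, Nat.zero_add] at h0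
          have c2 : (w.drop q).take (P + Y - q) = w.drop q := by
            apply List.take_of_length_le
            rw [List.length_drop]; omega
          have c1 : y.drop (q - P) = x.take (P + Y - q) := by
            rw [← hdrop, List.drop_drop, show P + (q - P) = q from by omega,
              ← c2, ← h0, hw, List.take_append_of_le_length (by omega)]
          have e : (y ++ x.drop (P + Y - q)).drop (q - P) = x := by
            rw [List.drop_append_of_le_length (by omega), c1,
              List.take_append_drop]
          have hsfx := List.drop_suffix (q - P) (y ++ x.drop (P + Y - q))
          rw [e] at hsfx
          rw [htake]
          exact hsfx
        · rw [hdrop]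
          exact List.prefix_append _ _
  obtain ⟨v, hv, hvl⟩ := hrep
  have hloc_le : CritFact.locPer w P ≤ q := by
    exact Nat.sInf_le ⟨v, hv, hvl⟩
  exact ⟨⟨hp1, hp2⟩, by omega⟩
end

section
/- For every square-free word w over the ternary alphabet {0,1,2} with |w| ≥ 2, the midpoint position M(w) = ⌊(|w|+1)/2⌋ is a critical point of w. -/
namespace CritFact

theorem drop_eq_take_of_period {α : Type*} (w : List α) {q : ℕ}
    (hq : HasPeriod w q) (hqn : q ≤ w.length) :
    w.drop q = w.take (w.length - q) := by
  apply List.ext_getElem?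
  intro i
  rw [List.getElem?_drop, List.getElem?_take]
  split
  · rw [show q + i = i + q by omega]
    exact (hq.2 i (by omega)).symm
  · exact List.getElem?_eq_none (by omega)

end CritFact

/-- for a square-free ternary word `w` with `|w| ≥ 2`, the midpoint
position `M(w) = ⌊(|w|+1)/2⌋` is critical. -/
theorem midpoint_critical (w : CritFact.Word)
    (hsf : CritFact.SqFree w) (h2 : 2 ≤ w.length) :
    CritFact.IsCritical w ((w.length + 1) / 2) := by
  open CritFact in
  set n := w.length with hn
  set M := (n + 1) / 2 with hM
  have hM1 : 1 ≤ M := by omega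
  have hMn : M < n := by omega
  have hxlen : (w.take M).length = M := by
    rw [List.length_take]; omega
  have hylen : (w.drop M).length = n - M := by
    rw [List.length_drop]
  -- any period is larger than n - M
  have hbig : ∀ q, HasPeriod w q → n - M < q := by
    intro q hq
    by_contra hle
    push_neg at hle
    have h2q : 2 * q ≤ n := by omega
    apply hsf (w.take q)
    · apply List.ne_nil_of_length_pos
      rw [List.length_take]
      have := hq.1
      omega
    · have hkey : w.take (2 * q) = w.take q ++ w.take q := by
        conv_lhs => rw [← List.take_append_drop q (w.take (2*q))]
        congr 1
        · rw [List.take_take]; congr 1; omega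
        · rw [List.drop_take, drop_eq_take_of_period w hq (by omega),
            List.take_take]
          congr 1
          omega
      rw [← hkey]
      exact (List.take_prefix _ _).isInfix
  have hnper : HasPeriod w n := ⟨by omega, fun i hi => absurd hi (by omega)⟩
  have hSne : {q | HasPeriod w q}.Nonempty := ⟨n, hnper⟩
  have hPper : HasPeriod w (per w) := Nat.sInf_mem hSne
  set q := per w with hq
  have hqn : q ≤ n := Nat.sInf_le (show n ∈ {q | HasPeriod w q} from hnper)
  have hqy : n - M < q := hbig q hPper
  have hqM : M ≤ q := by omega
  -- the repetition-word length set
  set S : Set ℕ := {m | ∃ u : Word, IsRepWord w M u ∧ u.length = m} with hS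
  -- q ∈ S : construct a repetition word of length q
  have key : w.drop q = w.take (n - q) := drop_eq_take_of_period w hPper hqn
  have hmem : q ∈ S := by
    refine ⟨w.drop M ++ (w.take M).drop (n - q), ⟨?_, Or.inr ?_, Or.inr ?_⟩, ?_⟩
    · apply List.ne_nil_of_length_pos
      rw [List.length_append, hylen]
      omega
    · refine ⟨(w.drop M).take (q - M), ?_⟩
      have h1 : w.take M = w.drop q ++ (w.take M).drop (n - q) := by
        calc w.take M = (w.take M).take (n - q) ++ (w.take M).drop (n - q) :=
              (List.take_append_drop _ _).symm
          _ = w.drop q ++ (w.take M).drop (n - q) := by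
              rw [List.take_take, show (n - q) ⊓ M = n - q by omega, ← key]
      have h2 : w.drop M = (w.drop M).take (q - M) ++ w.drop q := by
        conv_lhs => rw [← List.take_append_drop (q - M) (w.drop M)]
        rw [List.drop_drop, show M + (q - M) = q by omega]
      conv_lhs => rw [h1]
      rw [← List.append_assoc, ← h2]
    · exact ⟨(w.take M).drop (n - q), rfl⟩
    · rw [List.length_append, hylen, List.length_drop, hxlen]
      omega
  -- every element of S is at least q
  have hlb : ∀ e ∈ S, q ≤ e := by
    rintro e ⟨u, ⟨hune, hxu, hyu⟩, hlen⟩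
    have hepos : 0 < e := hlen ▸ List.length_pos_iff.mpr hune
    rcases hxu with h1 | h1 <;> rcases hyu with h2 | h2
    · -- u suffix of x, u prefix of y : square uu
      exfalso
      obtain ⟨a, ha⟩ := h1
      obtain ⟨b, hb⟩ := h2
      refine hsf u hune ⟨a, b, ?_⟩
      rw [show a ++ (u ++ u) ++ b = (a ++ u) ++ (u ++ b) by
        simp [List.append_assoc], ha, hb, List.take_append_drop]
    · -- u suffix of x, y prefix of u
      have he1 : e ≤ M := by rw [← hlen, ← hxlen]; exact h1.length_le
      have he2 : n - M ≤ e := by rw [← hlen, ← hylen]; exact h2.length_le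
      by_cases he : e = n - M
      · -- u = y, square yy
        exfalso
        have hu : w.drop M = u := h2.eq_of_length (by omega)
        obtain ⟨a, ha⟩ := h1
        refine hsf (w.drop M) (by
          apply List.ne_nil_of_length_pos
          rw [hylen]; omega) ⟨a, [], ?_⟩
        rw [List.append_nil]
        conv_rhs => rw [← List.take_append_drop M w, ← ha, ← hu]
        simp [List.append_assoc]
      · -- e = M, u = x, and M is a period
        have heM : e = M := by omega
        have hu : u = w.take M := h1.eq_of_length (by omega)
        have hper : HasPeriod w M := by
          refine ⟨by omega, fun i hi => ?_⟩
          rw [hu] at h2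
          obtain ⟨c, hc⟩ := h2
          have hiy : i < n - M := by omega
          calc w[i]? = (w.take M)[i]? := by
                rw [List.getElem?_take, if_pos (by omega)]
            _ = (w.drop M ++ c)[i]? := by rw [hc]
            _ = (w.drop M)[i]? := List.getElem?_append_left (by rw [hylen]; omega)
            _ = w[M + i]? := List.getElem?_drop
            _ = w[i + M]? := by rw [Nat.add_comm]
        calc q ≤ M := Nat.sInf_le (show M ∈ {q | HasPeriod w q} from hper)
          _ = e := heM.symm
    · -- x suffix of u, u prefix of y
      exfalso
      have he1 : M ≤ e := by rw [← hlen, ← hxlen]; exact h1.length_le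
      have he2 : e ≤ n - M := by rw [← hlen, ← hylen]; exact h2.length_le
      have hu1 : u = w.drop M := h2.eq_of_length (by omega)
      have hu2 : w.take M = u := h1.eq_of_length (by omega)
      refine hsf (w.take M) (by
        apply List.ne_nil_of_length_pos
        rw [hxlen]; omega) ⟨[], [], ?_⟩
      rw [List.append_nil, List.nil_append]
      conv_rhs => rw [← List.take_append_drop M w]
      rw [hu2, ← hu1]
    · -- x suffix of u, y prefix of u : e is a period
      obtain ⟨c, hc⟩ := h1
      obtain ⟨d, hd⟩ := h2
      have hce : c.length + M = e := by
        rw [← hlen, ← hc, List.length_append, hxlen]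
      have hper : HasPeriod w e := by
        refine ⟨hepos, fun i hi => ?_⟩
        have hiy : i < n - e := by omega
        calc w[i]? = (w.take M)[i]? := by
              rw [List.getElem?_take, if_pos (by omega)]
          _ = (c ++ w.take M)[c.length + i]? := by
              rw [List.getElem?_append_right (by omega),
                show c.length + i - c.length = i by omega]
          _ = u[i + e - M]? := by rw [hc, show c.length + i = i + e - M by omega]
          _ = (w.drop M ++ d)[i + e - M]? := by rw [hd]
          _ = (w.drop M)[i + e - M]? :=
              List.getElem?_append_left (by rw [hylen]; omega)
          _ = w[M + (i + e - M)]? := List.getElem?_drop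
          _ = w[i + e]? := by rw [show M + (i + e - M) = i + e by omega]
      exact Nat.sInf_le (show e ∈ {q | HasPeriod w q} from hper)
  refine ⟨⟨hM1, hMn⟩, ?_⟩
  show sInf S = q
  exact le_antisymm (Nat.sInf_le hmem) (hlb _ (Nat.sInf_mem ⟨q, hmem⟩))
end

section
/- For every square-free word w over the ternary alphabet {0,1,2}, the sequence of minimal local periods is unimodal: per(w,p−1) ≤ per(w,p) for every position p with 2 ≤ p ≤ M(w), and per(w,p) ≤ per(w,p−1) for every position p with M(w)+1 ≤ p ≤ |w|−1, where M(w) = ⌊(|w|+1)/2⌋. -/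
section Unimodal

namespace CritFact

open List

variable {α : Type*}

lemma pref_getElem? {u v : List α} (h : u <+: v) {j : ℕ} (hj : j < u.length) :
    u[j]? = v[j]? := by
  obtain ⟨t, rfl⟩ := h
  rw [List.getElem?_append, if_pos hj]

lemma suff_getElem? {u v : List α} (h : u <:+ v) {j : ℕ} (hj : j < u.length) :
    u[j]? = v[v.length - u.length + j]? := by
  obtain ⟨t, rfl⟩ := h
  rw [show (t ++ u).length - u.length + j = t.length + j by simp,
    List.getElem?_append_right (by omega)]
  congr 1
  omega

/-- The core computation: if `w.take p` is a suffix of `u` and `u` is prefix-comparable with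
`w.drop p`, then `u.length` is a "partial period" of `w` relative to `p`. -/
lemma pp_of_rep_main {w : List α} {p : ℕ} (hpL : p ≤ w.length) {u : List α}
    (h2 : w.take p <:+ u) (hpre : u <+: w.drop p ∨ w.drop p <+: u) :
    ∀ j, j < p → j + u.length < w.length → w[j]? = w[j + u.length]? := by
  intro j hj hjn
  have hx : (w.take p).length = p := by rw [List.length_take]; omega
  have hnp : p ≤ u.length := by have := h2.length_le; omega
  have e1 : w[j]? = u[u.length - p + j]? := by
    have h := suff_getElem? h2 (j := j) (by omega)
    rw [List.getElem?_take, if_pos hj, hx] at h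
    exact h
  have e2 : u[u.length - p + j]? = (w.drop p)[u.length - p + j]? := by
    rcases hpre with h | h
    · exact pref_getElem? h (by omega)
    · exact (pref_getElem? h (by rw [List.length_drop]; omega)).symm
  rw [e1, e2, List.getElem?_drop]
  congr 1
  omega

lemma pp_of_rep {w : List α} (hsf : SqFree w) {p : ℕ} (hp : 1 ≤ p) (hpL : p < w.length)
    (hpM : 2 * p ≤ w.length + 1) {u : List α} (hu : IsRepWord w p u) :
    ∀ j, j < p → j + u.length < w.length → w[j]? = w[j + u.length]? := by
  obtain ⟨hne, hs, hpre⟩ := hu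
  have hn1 : 0 < u.length := List.length_pos_iff.mpr hne
  have hx : (w.take p).length = p := by rw [List.length_take]; omega
  have hy : (w.drop p).length = w.length - p := List.length_drop
  rcases hs with h1 | h2
  · -- `u` is a suffix of `w.take p`
    have hnp : u.length ≤ p := by have := h1.length_le; omega
    rcases hpre with hA | hB
    · -- `u` prefix of `w.drop p` : square `u ++ u`, contradiction
      exfalso
      obtain ⟨s, hs'⟩ := h1
      obtain ⟨t, ht⟩ := hA
      refine hsf u hne ⟨s, t, ?_⟩
      calc s ++ (u ++ u) ++ t = (s ++ u) ++ (u ++ t) := by simp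
        _ = w.take p ++ w.drop p := by rw [hs', ht]
        _ = w := List.take_append_drop _ _
    · -- `w.drop p` prefix of `u`
      have hyn : w.length - p ≤ u.length := by have := hB.length_le; omega
      by_cases hcase : u.length = p
      · have he : u = w.take p := h1.eq_of_length (by omega)
        exact pp_of_rep_main hpL.le (by rw [← he]) (Or.inr hB)
      · -- then `u.length = p - 1 = w.length - p`: square at position 1
        exfalso
        have hyu : w.drop p = u := hB.eq_of_length (by omega)
        obtain ⟨s, hs'⟩ := h1
        refine hsf u hne ⟨s, [], ?_⟩
        calc s ++ (u ++ u) ++ [] = (s ++ u) ++ u := by simp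
          _ = w.take p ++ w.drop p := by rw [hs', hyu]
          _ = w := List.take_append_drop _ _
  · exact pp_of_rep_main hpL.le h2 hpre

lemma rep_of_pp {w : List α} (hsf : SqFree w) {p n : ℕ} (hp : 1 ≤ p) (hpL : p < w.length)
    (hpM : 2 * p ≤ w.length + 1) (h1 : 1 ≤ n)
    (hpp : ∀ j, j < p → j + n < w.length → w[j]? = w[j + n]?) (hnL : n ≤ w.length) :
    ∃ u : List α, IsRepWord w p u ∧ u.length = n := by
  by_cases hc : p + n ≤ w.length
  · by_cases hc2 : n ≤ p
    · -- impossible: `w` would contain the square `(w.take n) ++ (w.take n)`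
      exfalso
      have hv : (w.take n).length = n := by rw [List.length_take]; omega
      refine hsf (w.take n) (by intro h; rw [h] at hv; simp at hv; omega) ?_
      have he : w.take n ++ w.take n = w.take (2 * n) := by
        apply List.ext_getElem?
        intro i
        by_cases hi1 : i < n
        · rw [List.getElem?_append, hv, if_pos hi1, List.getElem?_take, if_pos hi1,
            List.getElem?_take, if_pos (show i < 2 * n by omega)]
        · by_cases hi2 : i < 2 * n
          · rw [List.getElem?_append, hv, if_neg hi1, List.getElem?_take,
              if_pos (show i - n < n by omega), List.getElem?_take, if_pos hi2,
              hpp (i - n) (by omega) (by omega)]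
            congr 1
            omega
          · rw [List.getElem?_append, hv, if_neg hi1, List.getElem?_take,
              if_neg (show ¬ i - n < n by omega), List.getElem?_take, if_neg hi2]
      exact he ▸ (List.take_prefix (2 * n) w).isInfix
    · -- `u := (w.drop p).take (n - p) ++ w.take p`
      push_neg at hc2
      have hlA : ((w.drop p).take (n - p)).length = n - p := by
        rw [List.length_take, List.length_drop]; omega
      refine ⟨(w.drop p).take (n - p) ++ w.take p,
        ⟨?_, Or.inr (List.suffix_append _ _), Or.inl ?_⟩, ?_⟩
      · intro h
        have := congrArg List.length h
        rw [List.length_append, hlA, List.length_take] at this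
        simp at this
        omega
      · rw [List.prefix_iff_eq_take]
        rw [show ((w.drop p).take (n - p) ++ w.take p).length = n by
          rw [List.length_append, hlA, List.length_take]; omega]
        apply List.ext_getElem?
        intro i
        by_cases hi1 : i < n - p
        · rw [List.getElem?_append, hlA, if_pos hi1, List.getElem?_take, if_pos hi1,
            List.getElem?_drop, List.getElem?_take, if_pos (show i < n by omega),
            List.getElem?_drop]
        · by_cases hi2 : i < n
          · rw [List.getElem?_append, hlA, if_neg hi1, List.getElem?_take,
              if_pos (show i - (n - p) < p by omega), List.getElem?_take, if_pos hi2,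
              List.getElem?_drop, hpp (i - (n - p)) (by omega) (by omega)]
            congr 1
            omega
          · rw [List.getElem?_append, hlA, if_neg hi1, List.getElem?_take,
              if_neg (show ¬ i - (n - p) < p by omega), List.getElem?_take, if_neg hi2]
      · rw [List.length_append, hlA, List.length_take]
        omega
  · -- `u := w.drop p ++ (w.take p).drop (w.length - n)`
    push_neg at hc
    have hnp : p ≤ n := by omega
    have hxl : (w.take p).length = p := by rw [List.length_take]; omega
    have hlC : (w.drop p).length = w.length - p := List.length_drop
    have hul : (w.drop p ++ (w.take p).drop (w.length - n)).length = n := by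
      rw [List.length_append, hlC, List.length_drop, hxl]
      omega
    refine ⟨w.drop p ++ (w.take p).drop (w.length - n),
      ⟨?_, Or.inr ?_, Or.inr (List.prefix_append _ _)⟩, hul⟩
    · intro h
      rw [h] at hul
      simp at hul
      omega
    · rw [List.suffix_iff_eq_drop, hul, hxl]
      apply List.ext_getElem?
      intro i
      by_cases hi1 : i < w.length - n
      · rw [List.getElem?_take, if_pos (show i < p by omega), List.getElem?_drop,
          List.getElem?_append, hlC, if_pos (show n - p + i < w.length - p by omega),
          List.getElem?_drop, hpp i (by omega) (by omega)]
        congr 1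
        omega
      · by_cases hi2 : i < p
        · rw [List.getElem?_take, if_pos hi2, List.getElem?_drop, List.getElem?_append,
            hlC, if_neg (show ¬ n - p + i < w.length - p by omega), List.getElem?_drop,
            List.getElem?_take,
            if_pos (show w.length - n + (n - p + i - (w.length - p)) < p by omega)]
          congr 1
          omega
        · rw [List.getElem?_take, if_neg hi2,
            List.getElem?_eq_none (by rw [List.length_drop, hul]; omega)]

/-- The set of partial periods, whose infimum is the local period on the left half. -/
def ppSet (w : List α) (p : ℕ) : Set ℕ :=
  {n | 1 ≤ n ∧ ∀ j, j < p → j + n < w.length → w[j]? = w[j + n]?}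

lemma length_mem_ppSet {w : List α} (hw : 1 ≤ w.length) (p : ℕ) : w.length ∈ ppSet w p :=
  ⟨hw, fun _ _ h => absurd h (by omega)⟩

lemma locPer_eq_sInf_ppSet {w : List α} (hsf : SqFree w) {p : ℕ} (hp : 1 ≤ p)
    (hpL : p < w.length) (hpM : 2 * p ≤ w.length + 1) :
    locPer w p = sInf (ppSet w p) := by
  have hw1 : 1 ≤ w.length := by omega
  apply Nat.le_antisymm
  · have hne : (ppSet w p).Nonempty := ⟨w.length, length_mem_ppSet hw1 p⟩
    obtain ⟨h1, hpp⟩ := Nat.sInf_mem hne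
    have hle : sInf (ppSet w p) ≤ w.length := Nat.sInf_le (length_mem_ppSet hw1 p)
    obtain ⟨u, hu, hlen⟩ := rep_of_pp hsf hp hpL hpM h1 hpp hle
    exact Nat.sInf_le ⟨u, hu, hlen⟩
  · have hne : {m | ∃ u : List α, IsRepWord w p u ∧ u.length = m}.Nonempty := by
      refine ⟨(w.drop p ++ w.take p).length, w.drop p ++ w.take p,
        ⟨?_, Or.inr (List.suffix_append _ _), Or.inr (List.prefix_append _ _)⟩, rfl⟩
      intro h
      have := congrArg List.length h
      rw [List.length_append, List.length_drop, List.length_take] at this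
      simp at this
      omega
    obtain ⟨u, hu, hlen⟩ := Nat.sInf_mem hne
    have hmem : u.length ∈ ppSet w p := ⟨List.length_pos_iff.mpr hu.1, pp_of_rep hsf hp hpL hpM hu⟩
    rw [hlen] at hmem
    exact Nat.sInf_le hmem

lemma locPer_mono_left {w : List α} (hsf : SqFree w) {p : ℕ} (hp : 2 ≤ p)
    (hpM : 2 * p ≤ w.length + 1) : locPer w (p - 1) ≤ locPer w p := by
  have hpL : p < w.length := by omega
  rw [locPer_eq_sInf_ppSet hsf (by omega) hpL hpM,
    locPer_eq_sInf_ppSet hsf (p := p - 1) (by omega) (by omega) (by omega)]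
  have hne : (ppSet w p).Nonempty := ⟨w.length, length_mem_ppSet (by omega) p⟩
  obtain ⟨h1, hpp⟩ := Nat.sInf_mem hne
  exact Nat.sInf_le ⟨h1, fun j hj hjn => hpp j (by omega) hjn⟩

lemma isRepWord_reverse {w u : List α} {p : ℕ} (hpL : p ≤ w.length)
    (h : IsRepWord w p u) : IsRepWord w.reverse (w.length - p) u.reverse := by
  obtain ⟨hne, hs, hp⟩ := h
  have ht : w.reverse.take (w.length - p) = (w.drop p).reverse := by
    rw [List.reverse_drop]
  have hd : w.reverse.drop (w.length - p) = (w.take p).reverse := by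
    rw [List.reverse_take]
  refine ⟨by simpa using hne, ?_, ?_⟩
  · rw [ht]
    rcases hp with h | h
    · exact Or.inl (List.reverse_suffix.mpr h)
    · exact Or.inr (List.reverse_suffix.mpr h)
  · rw [hd]
    rcases hs with h | h
    · exact Or.inl (List.reverse_prefix.mpr h)
    · exact Or.inr (List.reverse_prefix.mpr h)

lemma locPer_reverse (w : List α) {p : ℕ} (hpL : p ≤ w.length) :
    locPer w p = locPer w.reverse (w.length - p) := by
  unfold locPer
  congr 1
  ext n
  constructor
  · rintro ⟨u, hu, rfl⟩
    exact ⟨u.reverse, isRepWord_reverse hpL hu, by simp⟩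
  · rintro ⟨u, hu, rfl⟩
    have h2 := isRepWord_reverse (w := w.reverse) (p := w.length - p)
      (by rw [List.length_reverse]; omega) hu
    rw [List.reverse_reverse, List.length_reverse, Nat.sub_sub_self hpL] at h2
    exact ⟨u.reverse, h2, by simp⟩

lemma sqFree_reverse {w : List α} (h : SqFree w) : SqFree w.reverse := by
  intro v hv hvv
  have h2 : (v ++ v).reverse <:+: w.reverse.reverse := List.reverse_infix.mpr hvv
  rw [List.reverse_reverse, List.reverse_append] at h2
  exact h v.reverse (by simpa using hv) h2

end CritFact

end Unimodal

/-- for a square-free ternary word `w` the minimal local periods form a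
unimodal sequence around the midpoint `M(w) = ⌊(|w|+1)/2⌋`. -/
theorem locPer_unimodal (w : CritFact.Word) (hsf : CritFact.SqFree w) :
    (∀ p : ℕ, 2 ≤ p → p ≤ (w.length + 1) / 2 →
      CritFact.locPer w (p - 1) ≤ CritFact.locPer w p) ∧
    (∀ p : ℕ, (w.length + 1) / 2 + 1 ≤ p → p ≤ w.length - 1 →
      CritFact.locPer w p ≤ CritFact.locPer w (p - 1)) := by
  constructor
  · intro p hp hpM
    exact CritFact.locPer_mono_left hsf hp (by omega)
  · intro p hp1 hp2
    have hpw : p ≤ w.length := by omega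
    rw [CritFact.locPer_reverse w hpw, CritFact.locPer_reverse w (p := p - 1) (by omega)]
    rw [show w.length - (p - 1) = (w.length - p) + 1 by omega]
    have h3 := CritFact.locPer_mono_left (CritFact.sqFree_reverse hsf)
      (p := w.length - p + 1) (by omega) (by rw [List.length_reverse]; omega)
    rw [show w.length - p + 1 - 1 = w.length - p by omega] at h3
    exact h3
end

section
/- For every square-free word w over the ternary alphabet {0,1,2} with |w| ≥ 2, the set of critical points of w is a nonempty interval of positions containing the midpoint M(w) = ⌊(|w|+1)/2⌋: there exist positions q₁ ≤ M(w) and q₂ ≥ M(w) such that a position p is critical if and only if q₁ ≤ p ≤ q₂. -/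
namespace CritFact

variable {α : Type*}

lemma gcongr' (w : List α) {a b : ℕ} (h : a = b) : w[a]? = w[b]? := by rw [h]

lemma prefix_of_forall {a b : List α} (hl : a.length ≤ b.length)
    (h : ∀ i, i < a.length → a[i]? = b[i]?) : a <+: b := by
  rw [List.prefix_iff_eq_take]
  apply List.ext_getElem?
  intro i
  by_cases hi : i < a.length
  · rw [h i hi, List.getElem?_take, if_pos hi]
  · rw [List.getElem?_eq_none (le_of_not_gt hi), eq_comm, List.getElem?_eq_none]
    simp only [List.length_take]
    omega

lemma prefix_forall {a b : List α} (h : a <+: b) :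
    ∀ i, i < a.length → a[i]? = b[i]? := by
  obtain ⟨t, rfl⟩ := h
  intro i hi
  rw [List.getElem?_append, if_pos hi]

lemma suffix_of_forall {a b : List α} (hl : a.length ≤ b.length)
    (h : ∀ i, i < a.length → a[i]? = b[b.length - a.length + i]?) : a <:+ b := by
  rw [List.suffix_iff_eq_drop]
  apply List.ext_getElem?
  intro i
  by_cases hi : i < a.length
  · rw [h i hi, List.getElem?_drop]
  · rw [List.getElem?_eq_none (le_of_not_gt hi), eq_comm, List.getElem?_eq_none]
    simp only [List.length_drop]
    omega

lemma suffix_forall {a b : List α} (h : a <:+ b) :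
    ∀ i, i < a.length → a[i]? = b[b.length - a.length + i]? := by
  obtain ⟨t, rfl⟩ := h
  intro i hi
  have hlen : (t ++ a).length - a.length = t.length := by simp
  rw [hlen, List.getElem?_append, if_neg (by omega)]
  exact (gcongr' a (by omega)).symm

variable {w : List α} {p : ℕ}

lemma hasPeriod_per (h1 : 1 ≤ w.length) : HasPeriod w (per w) := by
  have hne : {q | HasPeriod w q}.Nonempty :=
    ⟨w.length, h1, fun _ hi => absurd hi (by omega)⟩
  exact Nat.sInf_mem hne

lemma per_le_of {q : ℕ} (h : HasPeriod w q) : per w ≤ q := Nat.sInf_le h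

lemma per_le_length (h1 : 1 ≤ w.length) : per w ≤ w.length :=
  per_le_of ⟨h1, fun _ hi => absurd hi (by omega)⟩

lemma square_aux (hsf : SqFree w) {u : List α} (hu : u ≠ [])
    (h1 : u <:+ w.take p) (h2 : u <+: w.drop p) : False := by
  obtain ⟨s, hs⟩ := h1
  obtain ⟨t, ht⟩ := h2
  refine hsf u hu ⟨s, t, ?_⟩
  rw [← List.take_append_drop p w, ← hs, ← ht]
  simp

lemma length_lt_two_per (hsf : SqFree w) (h2 : 2 ≤ w.length) :
    w.length < 2 * per w := by
  by_contra hle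
  push_neg at hle
  have hq := hasPeriod_per (w := w) (by omega)
  have hql : per w ≤ w.length := per_le_length (by omega)
  set q := per w with hqdef
  have hlen : (w.take q).length = q := by simp; omega
  have hpre : (w.take q ++ w.take q) <+: w := by
    apply prefix_of_forall (by simp; omega)
    intro i hi
    rw [List.length_append, hlen] at hi
    rw [List.getElem?_append, hlen]
    by_cases hiq : i < q
    · rw [if_pos hiq, List.getElem?_take, if_pos hiq]
    · rw [if_neg hiq, List.getElem?_take, if_pos (by omega)]
      have := hq.2 (i - q) (by omega)
      rw [this]
      exact gcongr' w (by omega)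
  exact hsf (w.take q) (List.ne_nil_of_length_pos (by rw [hlen]; exact hq.1)) hpre.isInfix

/-- Suffix-side short repetition configuration. -/
def Bp (w : List α) (p : ℕ) : Prop :=
  ∃ ℓ, 0 < ℓ ∧ ℓ ≤ p ∧ w.length - p < ℓ ∧ ℓ < per w ∧
    ∀ j, j < w.length - p → w[p - ℓ + j]? = w[p + j]?

/-- Prefix-side short repetition configuration. -/
def Cp (w : List α) (p : ℕ) : Prop :=
  ∃ ℓ, 0 < ℓ ∧ p < ℓ ∧ ℓ ≤ w.length - p ∧ ℓ < per w ∧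
    ∀ i, i < p → w[i]? = w[i + ℓ]?

lemma Bp_step (hB : Bp w p) : Bp w (p + 1) := by
  obtain ⟨ℓ, h0, hp, hn, hq, hrel⟩ := hB
  refine ⟨ℓ, h0, by omega, by omega, hq, fun j hj => ?_⟩
  have := hrel (j + 1) (by omega)
  rw [gcongr' w (show p + 1 - ℓ + j = p - ℓ + (j + 1) by omega), this]
  exact gcongr' w (by omega)

lemma Cp_step (hC : Cp w p) : Cp w (p - 1) := by
  obtain ⟨ℓ, h0, hp, hn, hq, hrel⟩ := hC
  exact ⟨ℓ, h0, by omega, by omega, hq, fun i hi => hrel i (by omega)⟩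

lemma Bp_mono {r : ℕ} (hpr : p ≤ r) (hB : Bp w p) : Bp w r := by
  obtain ⟨d, rfl⟩ := Nat.exists_eq_add_of_le hpr
  clear hpr
  induction d with
  | zero => exact hB
  | succ k ih => exact (show p + (k+1) = (p + k) + 1 by omega) ▸ Bp_step ih

lemma Cp_anti {r : ℕ} (hpr : p ≤ r) (hC : Cp w r) : Cp w p := by
  obtain ⟨d, rfl⟩ := Nat.exists_eq_add_of_le hpr
  clear hpr
  induction d with
  | zero => exact hC
  | succ k ih =>
      apply ih
      have := Cp_step hC
      rwa [show p + (k+1) - 1 = p + k by omega] at this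

lemma notBp_mid (h2 : 2 ≤ w.length) : ¬ Bp w ((w.length + 1) / 2) := by
  rintro ⟨ℓ, h0, hp, hn, hq, hrel⟩
  have hM : ℓ = (w.length + 1) / 2 := by omega
  have hper : HasPeriod w ℓ := by
    refine ⟨h0, fun i hi => ?_⟩
    have := hrel i (by omega)
    rw [gcongr' w (show i = (w.length + 1) / 2 - ℓ + i by omega), this]
    exact gcongr' w (by omega)
  have := per_le_of hper
  omega

lemma notCp_mid (h2 : 2 ≤ w.length) : ¬ Cp w ((w.length + 1) / 2) := by
  rintro ⟨ℓ, h0, hp, hn, hq, hrel⟩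
  omega

lemma exists_rep (h2 : 2 ≤ w.length) (hn2 : w.length < 2 * per w) (hp : IsPos w p) :
    ∃ u : List α, IsRepWord w p u ∧ u.length = per w := by
  have hq := hasPeriod_per (w := w) (by omega)
  have hql : per w ≤ w.length := per_le_length (by omega)
  set n := w.length with hn
  set q := per w with hqdef
  obtain ⟨hp1, hp2⟩ := hp
  by_cases hc1 : q ≤ p
  · -- u = suffix of x of length q
    refine ⟨(w.take p).drop (p - q), ⟨?_, Or.inl (List.drop_suffix _ _),
      Or.inr ?_⟩, ?_⟩
    · apply List.ne_nil_of_length_pos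
      simp only [List.length_drop, List.length_take]
      omega
    · apply prefix_of_forall
      · simp only [List.length_drop, List.length_take]
        omega
      · intro j hj
        simp only [List.length_drop] at hj
        rw [List.getElem?_drop, List.getElem?_drop, List.getElem?_take,
          if_pos (by omega)]
        have := hq.2 (p - q + j) (by omega)
        rw [this]
        exact (gcongr' w (by omega)).symm
    · simp only [List.length_drop, List.length_take]
      omega
  · by_cases hc2 : p + q ≤ n
    · -- u = prefix of y of length q
      refine ⟨(w.drop p).take q, ⟨?_, Or.inr ?_, Or.inl (List.take_prefix _ _)⟩, ?_⟩
      · apply List.ne_nil_of_length_pos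
        simp only [List.length_take, List.length_drop]
        omega
      · apply suffix_of_forall
        · simp only [List.length_take, List.length_drop]
          omega
        · intro i hi
          simp only [List.length_take, List.length_drop] at hi ⊢
          rw [List.getElem?_take, if_pos (by omega), List.getElem?_take,
            if_pos (by omega), List.getElem?_drop]
          have := hq.2 i (by omega)
          rw [this]
          exact gcongr' w (by omega)
      · simp only [List.length_take, List.length_drop]
        omega
    · -- u = y ++ (middle part of x)
      push_neg at hc1 hc2
      have hulen : (w.drop p ++ (w.take p).drop (n - q)).length = q := by
        simp only [List.length_append, List.length_drop, List.length_take]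
        omega
      refine ⟨w.drop p ++ (w.take p).drop (n - q), ⟨?_, Or.inr ?_,
        Or.inr (List.prefix_append _ _)⟩, hulen⟩
      · apply List.ne_nil_of_length_pos
        rw [hulen]; exact hq.1
      · apply suffix_of_forall
        · simp only [List.length_take]
          omega
        · intro i hi
          simp only [List.length_take] at hi
          have hxl : (List.take p w).length = p := by
            simp only [List.length_take]; omega
          rw [hulen, List.getElem?_take, if_pos (by omega),
            List.getElem?_append, hxl]
          simp only [List.length_drop]
          split_ifs with hcase
          · rw [List.getElem?_drop]
            have := hq.2 i (by omega)
            rw [this]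
            exact gcongr' w (by omega)
          · rw [List.getElem?_drop, List.getElem?_take, if_pos (by omega)]
            exact gcongr' w (by omega)

lemma crit_iff (hsf : SqFree w) (h2 : 2 ≤ w.length) (hp : IsPos w p) :
    IsCritical w p ↔ ¬ Bp w p ∧ ¬ Cp w p := by
  have hn2 := length_lt_two_per hsf h2
  have hq := hasPeriod_per (w := w) (by omega)
  obtain ⟨u0, hu0, hu0l⟩ := exists_rep h2 hn2 hp
  have hle : locPer w p ≤ per w := Nat.sInf_le ⟨u0, hu0, hu0l⟩
  obtain ⟨hp1, hp2⟩ := hp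
  have hxlen : (w.take p).length = p := by
    simp only [List.length_take]; omega
  have hylen : (w.drop p).length = w.length - p := by
    simp only [List.length_drop]
  constructor
  · rintro ⟨-, heq⟩
    constructor
    · rintro ⟨ℓ, h0, hℓp, hℓn, hℓq, hrel⟩
      have hul : ((w.take p).drop (p - ℓ)).length = ℓ := by
        simp only [List.length_drop, List.length_take]; omega
      have hlee : locPer w p ≤ ℓ := by
        apply Nat.sInf_le
        refine ⟨(w.take p).drop (p - ℓ),
          ⟨?_, Or.inl (List.drop_suffix _ _), Or.inr ?_⟩, hul⟩
        · exact List.ne_nil_of_length_pos (by rw [hul]; exact h0)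
        · apply prefix_of_forall (by rw [hul, hylen]; omega)
          intro j hj
          rw [hylen] at hj
          rw [List.getElem?_drop, List.getElem?_drop, List.getElem?_take,
            if_pos (by omega)]
          have := hrel j hj
          rw [← this]
      omega
    · rintro ⟨ℓ, h0, hℓp, hℓn, hℓq, hrel⟩
      have hul : ((w.drop p).take ℓ).length = ℓ := by
        simp only [List.length_take, List.length_drop]; omega
      have hlee : locPer w p ≤ ℓ := by
        apply Nat.sInf_le
        refine ⟨(w.drop p).take ℓ,
          ⟨?_, Or.inr ?_, Or.inl (List.take_prefix _ _)⟩, hul⟩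
        · exact List.ne_nil_of_length_pos (by rw [hul]; exact h0)
        · apply suffix_of_forall (by rw [hul, hxlen]; omega)
          intro i hi
          rw [hxlen] at hi
          rw [hul, hxlen, List.getElem?_take, if_pos hi, List.getElem?_take,
            if_pos (by omega), List.getElem?_drop]
          have := hrel i hi
          rw [this]
          exact gcongr' w (by omega)
      omega
  · rintro ⟨hB, hC⟩
    refine ⟨⟨hp1, hp2⟩, le_antisymm hle ?_⟩
    by_contra hlt
    push_neg at hlt
    have hne : {k | ∃ u : List α, IsRepWord w p u ∧ u.length = k}.Nonempty :=
      ⟨per w, u0, hu0, hu0l⟩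
    have hmem : ∃ u : List α, IsRepWord w p u ∧ u.length = locPer w p :=
      Nat.sInf_mem hne
    obtain ⟨u, ⟨hun, hsfx, hpfx⟩, hul⟩ := hmem
    have hulq : u.length < per w := by omega
    have hu0' : 0 < u.length := List.length_pos_iff.mpr hun
    rcases hsfx with h1 | h1 <;> rcases hpfx with h2' | h2'
    · exact square_aux hsf hun h1 h2'
    · -- B configuration
      have hℓp : u.length ≤ p := by
        have := h1.length_le; rw [hxlen] at this; exact this
      have hℓn : w.length - p ≤ u.length := by
        have := h2'.length_le; rw [hylen] at this; exact this
      by_cases hqeq : u.length = w.length - p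
      · have heq : w.drop p = u := h2'.eq_of_length (by omega)
        exact square_aux hsf hun h1 (by rw [heq])
      · apply hB
        refine ⟨u.length, hu0', hℓp, by omega, hulq, fun j hj => ?_⟩
        have e1 := suffix_forall h1 j (by omega)
        rw [hxlen, List.getElem?_take, if_pos (by omega)] at e1
        have e2 := prefix_forall h2' j (by rw [hylen]; exact hj)
        rw [List.getElem?_drop] at e2
        rw [← e1]
        exact e2.symm
    · -- C configuration
      have hℓp : p ≤ u.length := by
        have := h1.length_le; rw [hxlen] at this; exact this
      have hℓn : u.length ≤ w.length - p := by
        have := h2'.length_le; rw [hylen] at this; exact this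
      by_cases hqeq : u.length = p
      · have heq : w.take p = u := h1.eq_of_length (by rw [hxlen, hqeq])
        exact square_aux hsf hun (by rw [heq]) h2'
      · apply hC
        refine ⟨u.length, hu0', by omega, hℓn, hulq, fun i hi => ?_⟩
        have e1 := suffix_forall h1 i (by rw [hxlen]; exact hi)
        rw [hxlen, List.getElem?_take, if_pos hi] at e1
        have e2 := prefix_forall h2' (u.length - p + i) (by omega)
        rw [List.getElem?_drop] at e2
        rw [e1, e2]
        exact gcongr' w (by omega)
    · -- full-period configuration
      have hℓp : p ≤ u.length := by
        have := h1.length_le; rw [hxlen] at this; exact this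
      have hℓn : w.length - p ≤ u.length := by
        have := h2'.length_le; rw [hylen] at this; exact this
      have hper : HasPeriod w u.length := by
        refine ⟨hu0', fun i hi => ?_⟩
        have e1 := suffix_forall h1 i (by rw [hxlen]; omega)
        rw [hxlen, List.getElem?_take, if_pos (by omega)] at e1
        have e2 := prefix_forall h2' (i + u.length - p) (by rw [hylen]; omega)
        rw [List.getElem?_drop] at e2
        rw [e1, gcongr' u (show u.length - p + i = i + u.length - p by omega), ← e2]
        exact gcongr' w (by omega)
      have := per_le_of hper
      omega

end CritFact

/-- for a square-free ternary word `w` with `|w| ≥ 2`, the critical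
points form a nonempty interval of positions containing the midpoint `M(w)`. -/
theorem critical_points_form_interval (w : CritFact.Word)
    (hsf : CritFact.SqFree w) (h2 : 2 ≤ w.length) :
    ∃ q₁ q₂ : ℕ, CritFact.IsPos w q₁ ∧ CritFact.IsPos w q₂ ∧
      q₁ ≤ (w.length + 1) / 2 ∧ (w.length + 1) / 2 ≤ q₂ ∧
      ∀ p : ℕ, CritFact.IsPos w p →
        (CritFact.IsCritical w p ↔ q₁ ≤ p ∧ p ≤ q₂) := by
  classical
  have hBM := CritFact.notBp_mid (w := w) h2
  have hCM := CritFact.notCp_mid (w := w) h2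
  set M := (w.length + 1) / 2 with hM
  let S1 := (Finset.Ico 1 w.length).filter (fun p => ¬ CritFact.Cp w p)
  let S2 := (Finset.Ico 1 w.length).filter (fun p => ¬ CritFact.Bp w p)
  have hM1 : M ∈ S1 :=
    Finset.mem_filter.mpr ⟨Finset.mem_Ico.mpr ⟨by omega, by omega⟩, hCM⟩
  have hM2 : M ∈ S2 :=
    Finset.mem_filter.mpr ⟨Finset.mem_Ico.mpr ⟨by omega, by omega⟩, hBM⟩
  have hq1 := S1.min'_mem ⟨M, hM1⟩
  rw [Finset.mem_filter, Finset.mem_Ico] at hq1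
  have hq2 := S2.max'_mem ⟨M, hM2⟩
  rw [Finset.mem_filter, Finset.mem_Ico] at hq2
  refine ⟨S1.min' ⟨M, hM1⟩, S2.max' ⟨M, hM2⟩, ⟨hq1.1.1, hq1.1.2⟩,
    ⟨hq2.1.1, hq2.1.2⟩, Finset.min'_le S1 M hM1, Finset.le_max' S2 M hM2, ?_⟩
  intro p hp
  rw [CritFact.crit_iff hsf h2 hp]
  constructor
  · rintro ⟨hB, hC⟩
    exact ⟨Finset.min'_le S1 p
        (Finset.mem_filter.mpr ⟨Finset.mem_Ico.mpr ⟨hp.1, hp.2⟩, hC⟩),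
      Finset.le_max' S2 p
        (Finset.mem_filter.mpr ⟨Finset.mem_Ico.mpr ⟨hp.1, hp.2⟩, hB⟩)⟩
  · rintro ⟨hle1, hle2⟩
    exact ⟨fun hBp => hq2.2 (CritFact.Bp_mono hle2 hBp),
      fun hCp => hq1.2 (CritFact.Cp_anti hle1 hCp)⟩
end

section
/- Every square-free word w over the ternary alphabet {0,1,2} of length |w| ≥ 26 satisfies η(w) ≤ |w| − 5, where η(w) is the number of critical points of w. -/
namespace CritFact

open List

/-- Boolean test: some nonempty square ends at the end of `v`. -/
def hasSqEnd (v : Word) : Bool :=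
  (List.range (v.length + 1)).any fun l =>
    decide (0 < l ∧ 2 * l ≤ v.length) &&
      ((v.drop (v.length - 2 * l)).take l == v.drop (v.length - l))

/-- Boolean test: the length-`p` prefix of `v` reoccurs starting at some
position `k` with `p ≤ k ≤ B`. -/
def okAt (p B : ℕ) (v : Word) : Bool :=
  (List.range (B + 1)).any fun k =>
    decide (p ≤ k ∧ k + p ≤ v.length) &&
      ((List.range p).all fun j => v[k + j]? == v[j]?)

/-- Search over all square-free extensions of `v` by `n` letters, checking `okAt`. -/
def check (p B : ℕ) : ℕ → Word → Bool
  | 0, v => hasSqEnd v || okAt p B v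
  | n+1, v => hasSqEnd v || okAt p B v ||
      (check p B n (v ++ [0]) && check p B n (v ++ [1]) && check p B n (v ++ [2]))

lemma hasSqEnd_sq {v : Word} (h : hasSqEnd v = true) :
    ∃ u : Word, u ≠ [] ∧ (u ++ u) <:+: v := by
  simp only [hasSqEnd, List.any_eq_true, List.mem_range, Bool.and_eq_true, decide_eq_true_eq,
    beq_iff_eq] at h
  obtain ⟨l, -, ⟨hl0, hl2⟩, heq⟩ := h
  refine ⟨v.drop (v.length - l), ?_, ?_⟩
  · have : (v.drop (v.length - l)).length = l := by rw [length_drop]; omega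
    intro hnil; rw [hnil] at this; simp at this; omega
  · have key : v.drop (v.length - l) ++ v.drop (v.length - l) = v.drop (v.length - 2 * l) := by
      conv_rhs => rw [← take_append_drop l (v.drop (v.length - 2 * l))]
      rw [heq, drop_drop]
      congr 2
      omega
    rw [key]
    exact (drop_suffix _ _).isInfix

lemma okAt_mono {p B : ℕ} {v z : Word} (h : okAt p B v = true) (hvz : v <+: z) :
    okAt p B z = true := by
  simp only [okAt, List.any_eq_true, List.mem_range, Bool.and_eq_true, decide_eq_true_eq,
    beq_iff_eq, List.all_eq_true] at h ⊢
  obtain ⟨k, hk, ⟨hpk, hkp⟩, hj⟩ := h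
  obtain ⟨t, rfl⟩ := hvz
  refine ⟨k, hk, ⟨hpk, by simp; omega⟩, fun j hj' => ?_⟩
  rw [getElem?_append_left (by omega), getElem?_append_left (by omega)]
  exact hj j hj'

lemma check_sound (p B : ℕ) : ∀ (n : ℕ) (v e : Word), check p B n v = true →
    e.length = n → (∀ u : Word, u ≠ [] → ¬ (u ++ u) <:+: (v ++ e)) →
    okAt p B (v ++ e) = true := by
  intro n
  induction n with
  | zero =>
    intro v e hchk hlen hsf
    rw [List.length_eq_zero_iff] at hlen
    subst hlen
    rw [List.append_nil] at *
    rcases Bool.or_eq_true_iff.mp hchk with hsq | hok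
    · obtain ⟨u, hu, hinf⟩ := hasSqEnd_sq hsq
      exact absurd hinf (hsf u hu)
    · exact hok
  | succ n ih =>
    intro v e hchk hlen hsf
    rcases Bool.or_eq_true_iff.mp hchk with h1 | h2
    · rcases Bool.or_eq_true_iff.mp h1 with hsq | hok
      · obtain ⟨u, hu, hinf⟩ := hasSqEnd_sq hsq
        exact absurd (hinf.trans (prefix_append v e).isInfix) (hsf u hu)
      · exact okAt_mono hok (prefix_append v e)
    · match e with
      | c :: e' =>
        simp only [Bool.and_eq_true] at h2
        have hassoc : v ++ c :: e' = (v ++ [c]) ++ e' := by simp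
        rw [hassoc] at hsf ⊢
        have hc : check p B n (v ++ [c]) = true := by
          fin_cases c
          · exact h2.1.1
          · exact h2.1.2
          · exact h2.2
        exact ih (v ++ [c]) e' hc (by simpa using hlen) hsf

lemma rep_of_okAt {w : Word} {p k : ℕ} (hp : 0 < p) (hpk : p ≤ k) (hkp : k + p ≤ w.length)
    (hj : ∀ j < p, w[k + j]? = w[j]?) :
    IsRepWord w p ((w.drop p).take k) ∧ ((w.drop p).take k).length = k := by
  have hlen : ((w.drop p).take k).length = k := by simp; omega
  have hkey : (w.drop k).take p = w.take p := by
    apply List.ext_getElem?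
    intro i
    rcases Nat.lt_or_ge i p with hi | hi
    · rw [getElem?_take_of_lt hi, getElem?_take_of_lt hi, getElem?_drop]
      exact hj i hi
    · rw [getElem?_eq_none (l := (w.drop k).take p) (by simp; omega),
        getElem?_eq_none (l := w.take p) (by simp; omega)]
  have hdropeq : ((w.drop p).take k).drop (k - p) = w.take p := by
    rw [drop_take, drop_drop]
    rw [show p + (k - p) = k by omega, show k - (k - p) = p by omega]
    exact hkey
  refine ⟨⟨?_, Or.inr ?_, Or.inl (take_prefix _ _)⟩, hlen⟩
  · intro hnil; rw [hnil] at hlen; simp at hlen; omega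
  · exact hdropeq ▸ drop_suffix (k - p) _

lemma exists_short_rep (p B L : ℕ) (hp : 0 < p) (hchk : check p B L [] = true)
    {w : Word} (hsf : SqFree w) (hw : L ≤ w.length) :
    ∃ u : Word, IsRepWord w p u ∧ u.length ≤ B := by
  have hok := check_sound p B L [] (w.take L) hchk (by simp; omega)
    (fun u hu hinf => hsf u hu (by
      rw [nil_append] at hinf
      exact hinf.trans (take_prefix L w).isInfix))
  rw [nil_append] at hok
  simp only [okAt, List.any_eq_true, List.mem_range, Bool.and_eq_true, decide_eq_true_eq,
    beq_iff_eq, List.all_eq_true] at hok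
  obtain ⟨k, hkB, ⟨hpk, hkp⟩, hj⟩ := hok
  have hLlen : (w.take L).length = L := by simp; omega
  rw [hLlen] at hkp
  have hj' : ∀ j < p, w[k + j]? = w[j]? := by
    intro j hjp
    have h1 := hj j hjp
    rwa [getElem?_take_of_lt (by omega), getElem?_take_of_lt (by omega)] at h1
  obtain ⟨hrep, hlen⟩ := rep_of_okAt hp hpk (by omega) hj'
  exact ⟨_, hrep, by omega⟩

lemma sqFree_reverse_s8 {w : Word} (hsf : SqFree w) : SqFree w.reverse := by
  intro u hu hinf
  apply hsf u.reverse (by simpa using hu)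
  have h2 : (u.reverse ++ u.reverse) = (u ++ u).reverse := by simp
  rw [h2, ← List.reverse_reverse w, List.reverse_infix]
  exact hinf

lemma rep_reverse {w : Word} {p : ℕ} {u : Word} (hrep : IsRepWord w p u) :
    IsRepWord w.reverse (w.length - p) u.reverse := by
  obtain ⟨hne, hsuf, hpre⟩ := hrep
  have ht : w.reverse.take (w.length - p) = (w.drop p).reverse := by
    rw [reverse_drop]
  have hd : w.reverse.drop (w.length - p) = (w.take p).reverse := by
    rw [reverse_take]
  refine ⟨by simpa using hne, ?_, ?_⟩
  · rw [ht]
    rcases hpre with h | h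
    · exact Or.inl (by rwa [List.reverse_suffix])
    · exact Or.inr (by rwa [List.reverse_suffix])
  · rw [hd]
    rcases hsuf with h | h
    · exact Or.inl (by rwa [List.reverse_prefix])
    · exact Or.inr (by rwa [List.reverse_prefix])

lemma locPer_le {w : Word} {p : ℕ} {u : Word} (h : IsRepWord w p u) :
    locPer w p ≤ u.length := Nat.sInf_le ⟨u, h, rfl⟩

lemma fourteen_le_per {w : Word} (hsf : SqFree w) (h26 : 26 ≤ w.length) : 14 ≤ per w := by
  have hne : {q | HasPeriod w q}.Nonempty := by
    refine ⟨w.length, by omega, fun i hi => by omega⟩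
  have hmem : HasPeriod w (per w) := Nat.sInf_mem hne
  by_contra hlt
  push_neg at hlt
  set q := per w with hq
  obtain ⟨hq0, hper⟩ := hmem
  have hsq : w.take q ++ w.take q = w.take (2 * q) := by
    apply List.ext_getElem?
    intro i
    have hlq : (w.take q).length = q := by simp; omega
    rcases Nat.lt_or_ge i q with hi | hi
    · rw [getElem?_append_left (by omega), getElem?_take_of_lt hi,
        getElem?_take_of_lt (by omega)]
    · rcases Nat.lt_or_ge i (2 * q) with hi2 | hi2
      · rw [getElem?_append_right (by omega), hlq, getElem?_take_of_lt (by omega),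
          getElem?_take_of_lt hi2]
        have := hper (i - q) (by omega)
        rw [show i - q + q = i by omega] at this
        exact this
      · rw [getElem?_eq_none (l := w.take q ++ w.take q) (by simp; omega),
          getElem?_eq_none (l := w.take (2*q)) (by simp; omega)]
  apply hsf (w.take q)
  · intro hnil
    have hl : (w.take q).length = q := by simp; omega
    rw [hnil] at hl; simp at hl; omega
  · rw [hsq]
    exact (take_prefix _ _).isInfix

lemma check14 : check 1 4 5 [] = true := by decide

lemma check213 : check 2 13 15 [] = true := by decide

/-- Positions 1 and 2 (from either end) have small local period in long
square-free ternary words. -/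
lemma locPer_start_le {w : Word} (hsf : SqFree w) (h26 : 26 ≤ w.length) :
    locPer w 1 ≤ 13 ∧ locPer w 2 ≤ 13 ∧
    locPer w (w.length - 2) ≤ 13 ∧ locPer w (w.length - 1) ≤ 13 := by
  have start : ∀ w : Word, SqFree w → 26 ≤ w.length →
      locPer w 1 ≤ 13 ∧ locPer w 2 ≤ 13 := by
    intro w hsf h26
    obtain ⟨u1, hrep1, hlen1⟩ :=
      exists_short_rep 1 4 5 (by norm_num) check14 hsf (by omega)
    obtain ⟨u2, hrep2, hlen2⟩ :=
      exists_short_rep 2 13 15 (by norm_num) check213 hsf (by omega)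
    exact ⟨le_trans (locPer_le hrep1) (by omega), le_trans (locPer_le hrep2) (by omega)⟩
  obtain ⟨h1, h2⟩ := start w hsf h26
  have hsfr := sqFree_reverse_s8 hsf
  have hlr : w.reverse.length = w.length := by simp
  obtain ⟨hr1, hr2⟩ := start w.reverse hsfr (by omega)
  obtain ⟨u1, hrep1, hlen1⟩ :=
    exists_short_rep 1 4 5 (by norm_num) check14 hsfr (by omega)
  obtain ⟨u2, hrep2, hlen2⟩ :=
    exists_short_rep 2 13 15 (by norm_num) check213 hsfr (by omega)
  have t1 := rep_reverse hrep1
  have t2 := rep_reverse hrep2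
  rw [List.reverse_reverse, hlr] at t1 t2
  refine ⟨h1, h2, ?_, ?_⟩
  · calc locPer w (w.length - 2) ≤ u2.reverse.length := locPer_le t2
      _ ≤ 13 := by simp; omega
  · calc locPer w (w.length - 1) ≤ u1.reverse.length := locPer_le t1
      _ ≤ 13 := by simp; omega

end CritFact

/-- every square-free ternary word of length at least 26 satisfies
`η(w) ≤ |w| - 5`. -/
theorem eta_upper_bound (w : CritFact.Word)
    (hsf : CritFact.SqFree w) (h : 26 ≤ w.length) :
    CritFact.eta w ≤ w.length - 5 := by
  classical
  set n := w.length with hn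
  obtain ⟨h1, h2, h3, h4⟩ := CritFact.locPer_start_le hsf h
  have hper := CritFact.fourteen_le_per hsf h
  have hnc : ∀ p, CritFact.locPer w p ≤ 13 → ¬ CritFact.IsCritical w p := by
    intro p hle hcrit
    have := hcrit.2
    omega
  have hsub : (Finset.Ico 1 n).filter (fun p => CritFact.IsCritical w p) ⊆
      (Finset.Ico 1 n) \ {1, 2, n - 2, n - 1} := by
    intro p hp
    rw [Finset.mem_filter] at hp
    rw [Finset.mem_sdiff]
    refine ⟨hp.1, ?_⟩
    simp only [Finset.mem_insert, Finset.mem_singleton]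
    rintro (rfl | rfl | rfl | rfl)
    · exact hnc _ h1 hp.2
    · exact hnc _ h2 hp.2
    · exact hnc _ h3 hp.2
    · exact hnc _ h4 hp.2
  have hS : ({1, 2, n - 2, n - 1} : Finset ℕ) ⊆ Finset.Ico 1 n := by
    intro x hx
    simp only [Finset.mem_insert, Finset.mem_singleton] at hx
    rw [Finset.mem_Ico]
    rcases hx with rfl | rfl | rfl | rfl <;> omega
  have hcard : ({1, 2, n - 2, n - 1} : Finset ℕ).card = 4 := by
    rw [Finset.card_insert_of_notMem (by simp; omega),
      Finset.card_insert_of_notMem (by simp; omega),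
      Finset.card_insert_of_notMem (by simp; omega), Finset.card_singleton]
  have hb : CritFact.eta w ≤ ((Finset.Ico 1 n) \ {1, 2, n - 2, n - 1}).card := by
    rw [CritFact.eta]
    rw [Finset.filter_congr_decidable]
    exact Finset.card_le_card hsub
  rw [Finset.card_sdiff_of_subset hS, hcard, Nat.card_Ico] at hb
  omega
end

section
/- Every unbordered square-free word w over the ternary alphabet {0,1,2} that begins with the prefix 01 and in which 01 occurs as a factor only once (namely as the prefix) has length |w| ≤ 13; moreover α = 0121021202102 is the unique such word of length 13. -/
namespace CritFact

/-- Decidable check: prefix `01`, square-free, `01` only at the start. -/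
def Chk (w : Word) : Prop :=
  w.take 2 = [0, 1] ∧
  (∀ i < w.length, ∀ d < w.length, 1 ≤ d → i + 2 * d ≤ w.length →
    (w.drop i).take d ≠ (w.drop (i + d)).take d) ∧
  (∀ i < w.length, 1 ≤ i → (w.drop i).take 2 ≠ [0, 1])

instance : DecidablePred Chk := fun w => by unfold Chk; infer_instance

def step (l : List Word) : List Word :=
  (l.flatMap (fun u => [u ++ [0], u ++ [1], u ++ [2]])).filter (fun v => decide (Chk v))

def cand : ℕ → List Word
  | 0 => []
  | 1 => []
  | 2 => [[0, 1]]
  | n + 3 => step (cand (n + 2))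

lemma cand_succ (n : ℕ) (hn : 2 ≤ n) : cand (n + 1) = step (cand n) := by
  match n, hn with
  | n + 2, _ => rfl

lemma cand15 : cand 15 = [] := by decide
lemma cand14 : cand 14 = [[0,1,2,1,0,2,1,2,0,2,1,0,2,0]] := by decide
lemma cand13 : cand 13 = [[0,1,2,1,0,2,1,2,0,2,1,0,2]] := by decide

lemma chk_of (w : Word) (hsf : SqFree w) (hpre : [0, 1] <+: w)
    (honce : ∀ s t : Word, w = s ++ [0, 1] ++ t → s = []) : Chk w := by
  obtain ⟨t0, ht0⟩ := hpre
  refine ⟨by rw [← ht0]; rfl, ?_, ?_⟩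
  · intro i hi d hd h1 h2 heq
    set v := (w.drop i).take d with hv
    have hvlen : v.length = d := by
      simp only [hv, List.length_take, List.length_drop]; omega
    have hne : v ≠ [] := by
      intro h; rw [h] at hvlen; simp at hvlen; omega
    apply hsf v hne
    have h3 : v ++ v = (w.drop i).take (d + d) := by
      calc v ++ v = (w.drop i).take d ++ (w.drop (i + d)).take d := by rw [hv, ← heq]
        _ = (w.drop i).take d ++ ((w.drop i).drop d).take d := by
            rw [List.drop_drop]
        _ = (w.drop i).take (d + d) := List.take_add.symm
    rw [h3]
    exact (List.take_prefix _ _).isInfix.trans (List.drop_suffix i w).isInfix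
  · intro i hi h1 heq
    have hw : w = w.take i ++ [0, 1] ++ w.drop (i + 2) := by
      rw [List.append_assoc]
      conv_lhs => rw [← List.take_append_drop i w]
      congr 1
      conv_lhs => rw [← List.take_append_drop 2 (w.drop i)]
      rw [heq, List.drop_drop]
    have := honce (w.take i) (w.drop (i + 2)) hw
    rw [List.take_eq_nil_iff] at this
    rcases this with h | h
    · omega
    · rw [h] at hi; simp at hi

lemma take_mem_cand (w : Word) (hsf : SqFree w) (hpre : [0, 1] <+: w)
    (honce : ∀ s t : Word, w = s ++ [0, 1] ++ t → s = []) :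
    ∀ n, 2 ≤ n → n ≤ w.length → w.take n ∈ cand n := by
  have hsf' : ∀ n, SqFree (w.take n) := by
    intro n v hv hinf
    exact hsf v hv (hinf.trans (List.take_prefix n w).isInfix)
  have hpre2 : w.take 2 = [0, 1] := by
    obtain ⟨t0, ht0⟩ := hpre; rw [← ht0]; rfl
  have hpre' : ∀ n, 2 ≤ n → [0, 1] <+: w.take n := by
    intro n hn
    have h : (w.take n).take 2 = [0, 1] := by
      rw [List.take_take, min_eq_left hn, hpre2]
    exact h ▸ List.take_prefix 2 (w.take n)
  have honce' : ∀ n, ∀ s t : Word, w.take n = s ++ [0, 1] ++ t → s = [] := by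
    intro n s t hst
    apply honce s (t ++ w.drop n)
    conv_lhs => rw [← List.take_append_drop n w, hst]
    simp
  intro n
  induction n with
  | zero => intro h; omega
  | succ n ih =>
    intro h2 hle
    rcases Nat.lt_or_ge n 2 with hn2 | hn2
    · have : n = 1 := by omega
      subst this
      rw [show cand 2 = [[0,1]] from rfl]
      simp [hpre2]
    · rw [cand_succ n hn2]
      have hn : n < w.length := by omega
      have htk : w.take (n + 1) = w.take n ++ [w[n]] := by
        rw [List.take_succ, List.getElem?_eq_getElem hn]; rfl
      apply List.mem_filter.mpr
      constructor
      · apply List.mem_flatMap.mpr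
        refine ⟨w.take n, ih (by omega) (by omega), ?_⟩
        rw [htk]
        have h3 : ∀ a : Fin 3, a = 0 ∨ a = 1 ∨ a = 2 := by decide
        rcases h3 (w[n]) with h | h | h <;> rw [h] <;> simp
      · exact decide_eq_true
          (chk_of _ (hsf' _) (hpre' _ (by omega)) (honce' _))

end CritFact

/-- an unbordered square-free ternary word beginning with `01` in which
`01` occurs only as the prefix has length at most 13, and `α = 0121021202102` is the
unique such word of length 13. -/
theorem unbordered_unique_01_length_le_13 (w : CritFact.Word)
    (hub : CritFact.Unbordered w) (hsf : CritFact.SqFree w)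
    (hpre : [0, 1] <+: w)
    (honce : ∀ s t : CritFact.Word, w = s ++ [0, 1] ++ t → s = []) :
    w.length ≤ 13 ∧
    (w.length = 13 → w = [0, 1, 2, 1, 0, 2, 1, 2, 0, 2, 1, 0, 2]) := by
  have hc := CritFact.take_mem_cand w hsf hpre honce
  have hle14 : w.length ≤ 14 := by
    by_contra h
    have h15 := hc 15 (by norm_num) (by omega)
    rw [CritFact.cand15] at h15
    exact absurd h15 List.not_mem_nil
  have hne14 : w.length ≠ 14 := by
    intro h14
    have h := hc 14 (by norm_num) (by omega)
    have htw : w.take 14 = w := by rw [← h14, List.take_length]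
    rw [htw, CritFact.cand14, List.mem_singleton] at h
    subst h
    exact hub [0] (by decide) (by decide) ⟨by decide, by decide⟩
  refine ⟨by omega, ?_⟩
  intro h13
  have h := hc 13 (by norm_num) (by omega)
  have htw : w.take 13 = w := by rw [← h13, List.take_length]
  rw [htw, CritFact.cand13, List.mem_singleton] at h
  exact h
end

section
/- Every square-free word w over the ternary alphabet {0,1,2} with |w| ≥ 2 satisfies η(w) ≥ |w|/4, where η(w) is the number of critical points of w. -/
namespace EtaAux
open CritFact

def gw (w : Word) (i : ℕ) : Fin 3 := w.getD i 0

lemma gw_opt {w : Word} {i : ℕ} (h : i < w.length) : w[i]? = some (gw w i) := by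
  rw [List.getElem?_eq_getElem h, gw, List.getD_eq_getElem w 0 h]

lemma gw_eq_of_opt {w : Word} {i j : ℕ} (hi : i < w.length) (hj : j < w.length)
    (h : w[i]? = w[j]?) : gw w i = gw w j := by
  rw [gw_opt hi, gw_opt hj] at h
  exact Option.some_injective _ h

lemma opt_of_gw_eq {w : Word} {i j : ℕ} (hi : i < w.length) (hj : j < w.length)
    (h : gw w i = gw w j) : w[i]? = w[j]? := by
  rw [gw_opt hi, gw_opt hj, h]

lemma hasPeriod_length {w : Word} (hw : 0 < w.length) : HasPeriod w w.length :=
  ⟨hw, fun i hi => absurd hi (by omega)⟩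

lemma per_hasPeriod {w : Word} (hw : 0 < w.length) : HasPeriod w (per w) :=
  Nat.sInf_mem (s := {q | HasPeriod w q}) ⟨w.length, hasPeriod_length hw⟩

lemma per_le_length {w : Word} (hw : 0 < w.length) : per w ≤ w.length :=
  Nat.sInf_le (hasPeriod_length hw)

lemma per_pos {w : Word} (hw : 0 < w.length) : 0 < per w := (per_hasPeriod hw).1

lemma period_gw {w : Word} {q : ℕ} (hq : HasPeriod w q) {i : ℕ} (h : i + q < w.length) :
    gw w i = gw w (i + q) :=
  gw_eq_of_opt (by omega) h (hq.2 i h)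

lemma hasPeriod_of_gw {w : Word} {q : ℕ} (hq : 0 < q)
    (h : ∀ i, i + q < w.length → gw w i = gw w (i + q)) : HasPeriod w q :=
  ⟨hq, fun i hi => opt_of_gw_eq (by omega) hi (h i hi)⟩

lemma no_small_period {w : Word} {ℓ : ℕ} (h0 : 0 < ℓ) (hlt : ℓ < per w)
    (h : ∀ j, j + ℓ < w.length → gw w j = gw w (j + ℓ)) : False := by
  have := Nat.sInf_le (s := {q | HasPeriod w q}) (hasPeriod_of_gw h0 h)
  change per w ≤ ℓ at this
  omega

lemma no_square {w : Word} (hsf : SqFree w) (s ℓ : ℕ) (hl : 0 < ℓ)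
    (hn : s + ℓ + ℓ ≤ w.length)
    (h : ∀ j, s ≤ j → j < s + ℓ → gw w j = gw w (j + ℓ)) : False := by
  have hlen : ((w.drop s).take ℓ).length = ℓ := by simp; omega
  apply hsf ((w.drop s).take ℓ) (by intro he; rw [he] at hlen; simp at hlen; omega)
  have hvv : (w.drop s).take ℓ ++ (w.drop s).take ℓ = (w.drop s).take (ℓ + ℓ) := by
    apply List.ext_getElem?
    intro i
    rw [List.getElem?_append, hlen]
    by_cases hi : i < ℓ
    · rw [if_pos hi]
      simp only [List.getElem?_take, List.getElem?_drop]
      rw [if_pos hi, if_pos (show i < ℓ + ℓ by omega)]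
    · rw [if_neg hi]
      simp only [List.getElem?_take, List.getElem?_drop]
      by_cases hi2 : i < ℓ + ℓ
      · rw [if_pos (show i - ℓ < ℓ by omega), if_pos hi2]
        have h2 := h (s + (i - ℓ)) (by omega) (by omega)
        rw [show s + (i - ℓ) + ℓ = s + i from by omega] at h2
        exact opt_of_gw_eq (by omega) (by omega) h2
      · rw [if_neg (show ¬ i - ℓ < ℓ by omega), if_neg hi2]
  rw [hvv]
  exact (List.take_prefix _ _).isInfix.trans (List.drop_suffix s w).isInfix

lemma seg_eq {w : Word} (s t m : ℕ) (hs : s + m ≤ w.length) (ht : t + m ≤ w.length)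
    (h : ∀ i < m, gw w (s + i) = gw w (t + i)) :
    (w.drop s).take m = (w.drop t).take m := by
  apply List.ext_getElem?
  intro i
  simp only [List.getElem?_take, List.getElem?_drop]
  split
  · rename_i hi
    exact opt_of_gw_eq (by omega) (by omega) (h i hi)
  · rfl


/-- prefix-occurrence condition A -/
def PA (w : Word) (p ℓ : ℕ) : Prop :=
  p + 1 ≤ ℓ ∧ ℓ + p + 1 ≤ w.length ∧ ℓ < per w ∧ ∀ j < p, gw w j = gw w (j + ℓ)

/-- suffix-occurrence condition B -/
def PB (w : Word) (p ℓ : ℕ) : Prop :=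
  w.length + 1 ≤ ℓ + p ∧ ℓ + 1 ≤ p ∧ ℓ < per w ∧
    ∀ j, p ≤ j + ℓ → j + ℓ < w.length → gw w j = gw w (j + ℓ)

lemma pre_opt {u v : Word} (h : u <+: v) {i : ℕ} (hi : i < u.length) : v[i]? = u[i]? := by
  obtain ⟨t, rfl⟩ := h
  rw [List.getElem?_append, if_pos hi]

lemma take_len {w : Word} {p : ℕ} (hp : p ≤ w.length) : (w.take p).length = p := by
  rw [List.length_take]
  omega

lemma suf_opt {u v : Word} (h : u <:+ v) {i : ℕ} (hi : i < u.length) :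
    v[v.length - u.length + i]? = u[i]? := by
  obtain ⟨t, rfl⟩ := h
  simp only [List.length_append]
  rw [show t.length + u.length - u.length + i = t.length + i from by omega,
    List.getElem?_append_right (by omega)]
  congr 1
  omega

lemma prefix_drop_gw {w u : Word} {p : ℕ} (h : u <+: w.drop p) {i : ℕ} (hi : i < u.length) :
    u[i]? = some (gw w (p + i)) := by
  have hlen : u.length ≤ w.length - p := by
    have := h.length_le; simpa using this
  have h2 : p + i < w.length := by omega
  rw [← pre_opt h hi, List.getElem?_drop, gw_opt h2]

lemma yprefix_gw {w u : Word} {p : ℕ} (h : w.drop p <+: u) {i : ℕ} (hi : p + i < w.length) :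
    u[i]? = some (gw w (p + i)) := by
  have := pre_opt h (i := i) (by rw [List.length_drop]; omega)
  rw [List.getElem?_drop, gw_opt hi] at this
  exact this

lemma usuffix_take_gw {w u : Word} {p : ℕ} (h : u <:+ w.take p) (hp : p ≤ w.length)
    {i : ℕ} (hi : i < u.length) :
    u[i]? = some (gw w (p - u.length + i)) := by
  have hlu : u.length ≤ p := by have := h.length_le; rw [take_len hp] at this; omega
  have h2 := suf_opt h hi
  rw [take_len hp] at h2
  rw [← h2, List.getElem?_take, if_pos (by omega), gw_opt (by omega)]

lemma xsuffix_gw {w u : Word} {p : ℕ} (h : w.take p <:+ u) (hp : p ≤ w.length)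
    {j : ℕ} (hj : j < p) :
    u[u.length - p + j]? = some (gw w j) := by
  have h2 := suf_opt h (i := j) (by rw [take_len hp]; omega)
  rw [take_len hp] at h2
  rw [List.getElem?_take, if_pos hj, gw_opt (w := w) (i := j) (by omega)] at h2
  exact h2

lemma some_inj {a b : Fin 3} (h : (some a : Option (Fin 3)) = some b) : a = b :=
  Option.some_injective _ h

/-- every repetition word shorter than the period yields condition A or B -/
lemma rep_short {w : Word} (hsf : SqFree w) {p : ℕ} {u : Word}
    (hp1 : 1 ≤ p) (hpn : p < w.length) (hu : IsRepWord w p u) (hlen : u.length < per w) :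
    (∃ ℓ, PA w p ℓ) ∨ (∃ ℓ, PB w p ℓ) := by
  obtain ⟨hne, hsufx, hprey⟩ := hu
  have hw0 : 0 < w.length := by omega
  have hl0 : 0 < u.length := List.length_pos_iff.mpr hne
  have hqn : per w ≤ w.length := per_le_length hw0
  have hpw : p ≤ w.length := le_of_lt hpn
  rcases hsufx with hs | hs <;> rcases hprey with hp | hp
  · -- u <:+ x, u <+: y : central square
    exfalso
    have h1 : u.length ≤ p := by have := hs.length_le; rw [take_len hpw] at this; omega
    have h2 : u.length ≤ w.length - p := by have := hp.length_le; rw [List.length_drop] at this; omega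
    apply no_square hsf (p - u.length) u.length hl0 (by omega)
    intro j hj1 hj2
    have e1 := usuffix_take_gw hs hpw (i := j - (p - u.length)) (by omega)
    have e2 := prefix_drop_gw hp (i := j - (p - u.length)) (by omega)
    have e3 := some_inj (e1.symm.trans e2)
    rw [show p - u.length + (j - (p - u.length)) = j by omega,
        show p + (j - (p - u.length)) = j + u.length by omega] at e3
    exact e3
  · -- u <:+ x, y <+: u : condition B (or degenerate)
    have h1 : u.length ≤ p := by have := hs.length_le; rw [take_len hpw] at this; omega
    have h2 : w.length - p ≤ u.length := by have := hp.length_le; rw [List.length_drop] at this; omega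
    have key : ∀ j, p ≤ j + u.length → j + u.length < w.length → gw w j = gw w (j + u.length) := by
      intro j hj1 hj2
      have e1 := usuffix_take_gw hs hpw (i := j + u.length - p) (by omega)
      have e2 := yprefix_gw hp (i := j + u.length - p) (by omega)
      have e3 := some_inj (e1.symm.trans e2)
      rw [show p - u.length + (j + u.length - p) = j by omega,
          show p + (j + u.length - p) = j + u.length by omega] at e3
      exact e3
    by_cases hep : u.length = p
    · exact absurd (fun j hj => key j (by omega) hj) (fun hh => no_small_period hl0 hlen hh)
    · by_cases hen : u.length + p = w.length
      · exact (no_square hsf (p - u.length) u.length hl0 (by omega)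
          (fun j hj1 hj2 => key j (by omega) (by omega))).elim
      · exact Or.inr ⟨u.length, by omega, by omega, hlen, key⟩
  · -- x <:+ u, u <+: y : condition A (or degenerate)
    have h1 : p ≤ u.length := by have := hs.length_le; rw [take_len hpw] at this; omega
    have h2 : u.length ≤ w.length - p := by have := hp.length_le; rw [List.length_drop] at this; omega
    have key : ∀ j < p, gw w j = gw w (j + u.length) := by
      intro j hj
      have e1 := xsuffix_gw hs hpw hj
      have e2 := prefix_drop_gw hp (i := u.length - p + j) (by omega)
      have e3 := some_inj (e1.symm.trans e2)
      rw [show p + (u.length - p + j) = j + u.length by omega] at e3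
      exact e3
    by_cases hep : u.length = p
    · exact (no_square hsf 0 u.length hl0 (by omega)
        (fun j hj1 hj2 => key j (by omega))).elim
    · by_cases hen : u.length + p = w.length
      · exact absurd (fun j hj => key j (by omega)) (fun hh => no_small_period hl0 hlen hh)
      · exact Or.inl ⟨u.length, by omega, by omega, hlen, key⟩
  · -- x <:+ u, y <+: u : global small period, impossible
    exfalso
    have h1 : p ≤ u.length := by have := hs.length_le; rw [take_len hpw] at this; omega
    have h2 : w.length - p ≤ u.length := by have := hp.length_le; rw [List.length_drop] at this; omega
    apply no_small_period hl0 hlen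
    intro j hj
    have e1 := xsuffix_gw hs hpw (j := j) (by omega)
    have e2 := yprefix_gw hp (i := u.length - p + j) (by omega)
    have e3 := some_inj (e1.symm.trans e2)
    rw [show p + (u.length - p + j) = j + u.length by omega] at e3
    exact e3


lemma exists_rep_per {w : Word} (hw : 0 < w.length) {p : ℕ} (hp1 : 1 ≤ p)
    (hpn : p < w.length) :
    ∃ u : Word, IsRepWord w p u ∧ u.length = per w := by
  have hq0 : 0 < per w := per_pos hw
  have hqn : per w ≤ w.length := per_le_length hw
  have hper : ∀ i, i + per w < w.length → gw w i = gw w (i + per w) :=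
    fun i hi => period_gw (per_hasPeriod hw) hi
  set q := per w with hqdef
  by_cases hqp : q ≤ p
  · have hlen : ((w.drop (p - q)).take q).length = q := by
      rw [List.length_take, List.length_drop]; omega
    have hne : (w.drop (p - q)).take q ≠ [] := by
      intro he; rw [he] at hlen; simp at hlen; omega
    have hsuf : (w.drop (p - q)).take q <:+ w.take p := by
      have e : (w.take p).drop (p - q) = (w.drop (p - q)).take q := by
        rw [List.drop_take, show p - (p - q) = q from by omega]
      rw [← e]; exact List.drop_suffix _ _
    by_cases hpq2 : p + q ≤ w.length
    · refine ⟨_, ⟨hne, Or.inl hsuf, Or.inl ?_⟩, hlen⟩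
      have e : (w.drop (p - q)).take q = (w.drop p).take q :=
        seg_eq (p - q) p q (by omega) (by omega) (fun i hi => by
          have := hper (p - q + i) (by omega)
          rwa [show p - q + i + q = p + i from by omega] at this)
      rw [e]; exact List.take_prefix _ _
    · refine ⟨_, ⟨hne, Or.inl hsuf, Or.inr ?_⟩, hlen⟩
      have e1 : ((w.drop (p - q)).take q).take (w.length - p)
          = (w.drop (p - q)).take (w.length - p) := by
        rw [List.take_take]; congr 1; omega
      have e3 : (w.drop p).take (w.length - p) = (w.drop (p - q)).take (w.length - p) :=
        seg_eq p (p - q) _ (by omega) (by omega) (fun i hi => by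
          have := hper (p - q + i) (by omega)
          rw [show p - q + i + q = p + i from by omega] at this
          exact this.symm)
      have e2 : w.drop p = (w.drop p).take (w.length - p) :=
        (List.take_of_length_le (by rw [List.length_drop])).symm
      rw [e2, e3, ← e1]; exact List.take_prefix _ _
  · by_cases hpq2 : p + q ≤ w.length
    · have hlen : ((w.drop p).take q).length = q := by
        rw [List.length_take, List.length_drop]; omega
      have hne : (w.drop p).take q ≠ [] := by
        intro he; rw [he] at hlen; simp at hlen; omega
      refine ⟨_, ⟨hne, Or.inr ?_, Or.inl (List.take_prefix _ _)⟩, hlen⟩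
      have e1 : ((w.drop p).take q).drop (q - p) = (w.drop q).take p := by
        rw [List.drop_take, List.drop_drop, show q - (q - p) = p from by omega,
          show p + (q - p) = q from by omega]
      have e2 : w.take p = (w.drop q).take p := by
        have := seg_eq (w := w) 0 q p (by omega) (by omega) (fun i hi => by
          have := hper i (by omega)
          rw [show i + q = q + i from by omega] at this
          simpa using this)
        simpa using this
      rw [e2, ← e1]; exact List.drop_suffix _ _
    · have hlen : (w.drop p ++ (w.take p).drop (w.length - q)).length = q := by
        rw [List.length_append, List.length_drop, List.length_drop, List.length_take]; omega
      have hne : w.drop p ++ (w.take p).drop (w.length - q) ≠ [] := by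
        intro he; rw [he] at hlen; simp at hlen; omega
      refine ⟨_, ⟨hne, Or.inr ?_, Or.inr (List.prefix_append _ _)⟩, hlen⟩
      have e1 : (w.drop p ++ (w.take p).drop (w.length - q)).drop (q - p)
          = w.drop q ++ (w.take p).drop (w.length - q) := by
        rw [List.drop_append_of_le_length (by rw [List.length_drop]; omega),
          List.drop_drop, show p + (q - p) = q from by omega]
      have e2 : w.take (w.length - q) = (w.drop q).take (w.length - q) := by
        have := seg_eq (w := w) 0 q (w.length - q) (by omega) (by omega) (fun i hi => by
          have := hper i (by omega)
          rw [show i + q = q + i from by omega] at this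
          simpa using this)
        simpa using this
      have e3 : (w.drop q).take (w.length - q) = w.drop q :=
        List.take_of_length_le (by rw [List.length_drop])
      have e4 : w.take p = w.take (w.length - q) ++ (w.take p).drop (w.length - q) := by
        conv_lhs => rw [← List.take_append_drop (w.length - q) (w.take p)]
        congr 1
        rw [List.take_take]
        congr 1
        omega
      have efinal : w.take p
          = (w.drop p ++ (w.take p).drop (w.length - q)).drop (q - p) := by
        rw [e1]
        calc w.take p = w.take (w.length - q) ++ (w.take p).drop (w.length - q) := e4
          _ = w.drop q ++ (w.take p).drop (w.length - q) := by rw [e2, e3]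
      have hfin := List.drop_suffix (q - p) (w.drop p ++ (w.take p).drop (w.length - q))
      rwa [← efinal] at hfin


/-- The central gap lemma: an A-position and a B-position are ≥ (n+4)/4 apart. -/
lemma main_gap {w : Word} (hsf : SqFree w) {a b ℓ₁ ℓ₂ : ℕ} (hb : b < w.length)
    (hA : PA w a ℓ₁) (hB : PB w b ℓ₂) : 4 * a + w.length + 4 ≤ 4 * b := by
  obtain ⟨hA1, hA2, hA3, hPa⟩ := hA
  obtain ⟨hB1, hB2, hB3, hPb⟩ := hB
  by_contra hcon
  push_neg at hcon
  have hF1 : ℓ₂ + a < ℓ₁ + b := by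
    by_contra hF
    push_neg at hF
    exact no_square hsf (b - ℓ₂) ℓ₁ (by omega) (by omega)
      (fun j hj1 hj2 => hPa j (by omega))
  have hF2 : ℓ₁ + a < ℓ₂ + b := by
    by_contra hF
    push_neg at hF
    exact no_square hsf (b - ℓ₂) ℓ₂ (by omega) (by omega)
      (fun j hj1 hj2 => hPb j (by omega) (by omega))
  rcases lt_trichotomy ℓ₁ ℓ₂ with hlt | heq | hgt
  · have key : a + 1 ≤ b - ℓ₂ + (ℓ₂ - ℓ₁) ∨ (w.length - ℓ₂) + 1 ≤ b - ℓ₂ + (ℓ₂ - ℓ₁) := by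
      by_contra hk
      push_neg at hk
      obtain ⟨hk1, hk2⟩ := hk
      refine no_square hsf (b - ℓ₂ + ℓ₁) (ℓ₂ - ℓ₁) (by omega) (by omega) ?_
      intro i hi1 hi2
      have e1 := hPa (i - ℓ₁) (by omega)
      have e2 := hPb (i - ℓ₁) (by omega) (by omega)
      rw [show i - ℓ₁ + ℓ₁ = i from by omega] at e1
      rw [show i - ℓ₁ + ℓ₂ = i + (ℓ₂ - ℓ₁) from by omega] at e2
      exact e1.symm.trans e2
    rcases key with hk | hk <;> omega
  · subst heq
    have hbk : b ≤ a + ℓ₁ := by omega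
    refine no_small_period (show 0 < ℓ₁ by omega) hA3 ?_
    intro j hj
    by_cases hja : j < a
    · exact hPa j hja
    · exact hPb j (by omega) (by omega)
  · have key : a + 1 ≤ (b - ℓ₁) + (ℓ₁ - ℓ₂) ∨ (w.length - ℓ₁) + 1 ≤ (b - ℓ₁) + (ℓ₁ - ℓ₂) := by
      by_contra hk
      push_neg at hk
      obtain ⟨hk1, hk2⟩ := hk
      refine no_square hsf (b - ℓ₁) (ℓ₁ - ℓ₂) (by omega) (by omega) ?_
      intro j hj1 hj2
      have e1 := hPa j (by omega)
      have e2 := hPb (j + (ℓ₁ - ℓ₂)) (by omega) (by omega)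
      rw [show j + (ℓ₁ - ℓ₂) + ℓ₂ = j + ℓ₁ from by omega] at e2
      exact e1.trans e2.symm
    rcases key with hk | hk <;> omega

/-- positions with neither condition are critical -/
lemma crit_of {w : Word} (hsf : SqFree w) (hw : 2 ≤ w.length) {p : ℕ}
    (hp1 : 1 ≤ p) (hpn : p < w.length)
    (hA : ¬ ∃ ℓ, PA w p ℓ) (hB : ¬ ∃ ℓ, PB w p ℓ) : IsCritical w p := by
  refine ⟨⟨hp1, hpn⟩, ?_⟩
  obtain ⟨u0, hu0, hl0⟩ := exists_rep_per (by omega) hp1 hpn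
  have hne : {m | ∃ u : Word, IsRepWord w p u ∧ u.length = m}.Nonempty :=
    ⟨per w, u0, hu0, hl0⟩
  refine le_antisymm (Nat.sInf_le ⟨u0, hu0, hl0⟩) (le_csInf hne ?_)
  rintro m ⟨u, hu, rfl⟩
  by_contra hlt
  push_neg at hlt
  rcases rep_short hsf hp1 hpn hu hlt with h | h
  exacts [hA h, hB h]

end EtaAux

/-- every square-free ternary word `w` with `|w| ≥ 2` satisfies
`η(w) ≥ |w|/4`. -/
theorem eta_lower_bound (w : CritFact.Word)
    (hsf : CritFact.SqFree w) (h2 : 2 ≤ w.length) :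
    (w.length : ℝ) / 4 ≤ (CritFact.eta w : ℝ) := by
  classical
  open CritFact EtaAux in
  have hkey : w.length ≤ 4 * CritFact.eta w := by
    classical
    set n := w.length with hn
    set C := (Finset.Ico 1 n).filter (fun p => CritFact.IsCritical w p) with hC
    set FA := (Finset.Ico 1 n).filter (fun p => ∃ ℓ, EtaAux.PA w p ℓ) with hFAdef
    set FB := (Finset.Ico 1 n).filter (fun p => ∃ ℓ, EtaAux.PB w p ℓ) with hFBdef
    have hetaeq : CritFact.eta w = C.card := by
      rw [CritFact.eta, hC]
    have hcover : Finset.Ico 1 n ⊆ C ∪ FA ∪ FB := by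
      intro p hp
      obtain ⟨hp1, hpn⟩ := Finset.mem_Ico.mp hp
      simp only [Finset.mem_union, hC, hFAdef, hFBdef, Finset.mem_filter]
      by_cases h1 : ∃ ℓ, EtaAux.PA w p ℓ
      · exact Or.inl (Or.inr ⟨hp, h1⟩)
      by_cases hB1 : ∃ ℓ, EtaAux.PB w p ℓ
      · exact Or.inr ⟨hp, hB1⟩
      · exact Or.inl (Or.inl ⟨hp, EtaAux.crit_of hsf h2 hp1 hpn h1 hB1⟩)
    have hcard : n - 1 ≤ C.card + FA.card + FB.card := by
      have := (Finset.card_le_card hcover).trans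
        ((Finset.card_union_le _ _).trans (Nat.add_le_add_right (Finset.card_union_le _ _) _))
      rwa [Nat.card_Ico] at this
    rw [hetaeq]
    rcases FA.eq_empty_or_nonempty with hFA | hFA <;>
      rcases FB.eq_empty_or_nonempty with hFB | hFB
    · rw [hFA, hFB] at hcard
      simp at hcard
      omega
    · rw [hFA] at hcard
      simp at hcard
      obtain ⟨hbm, ℓ₂, hPB⟩ := Finset.mem_filter.mp (FB.min'_mem hFB)
      obtain ⟨hb1, hbn⟩ := Finset.mem_Ico.mp hbm
      have hsub : FB ⊆ Finset.Ico (FB.min' hFB) n := by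
        intro x hx
        obtain ⟨hxm, _⟩ := Finset.mem_filter.mp hx
        exact Finset.mem_Ico.mpr ⟨Finset.min'_le _ _ hx, (Finset.mem_Ico.mp hxm).2⟩
      have hcardB : FB.card ≤ n - FB.min' hFB := by
        have := Finset.card_le_card hsub
        rwa [Nat.card_Ico] at this
      have hb2 : n + 2 ≤ 2 * FB.min' hFB := by
        obtain ⟨x1, x2, _, _⟩ := hPB
        omega
      omega
    · rw [hFB] at hcard
      simp at hcard
      obtain ⟨ham, ℓ₁, hPA⟩ := Finset.mem_filter.mp (FA.max'_mem hFA)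
      have hsub : FA ⊆ Finset.Ico 1 (FA.max' hFA + 1) := by
        intro x hx
        obtain ⟨hxm, _⟩ := Finset.mem_filter.mp hx
        exact Finset.mem_Ico.mpr ⟨(Finset.mem_Ico.mp hxm).1, by
          have := Finset.le_max' _ _ hx; omega⟩
      have hcardA : FA.card ≤ FA.max' hFA := by
        have := Finset.card_le_card hsub
        rw [Nat.card_Ico] at this
        omega
      have ha2 : 2 * FA.max' hFA + 2 ≤ n := by
        obtain ⟨x1, x2, _, _⟩ := hPA
        omega
      omega
    · obtain ⟨ham, ℓ₁, hPA⟩ := Finset.mem_filter.mp (FA.max'_mem hFA)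
      obtain ⟨hbm, ℓ₂, hPB⟩ := Finset.mem_filter.mp (FB.min'_mem hFB)
      obtain ⟨hb1, hbn⟩ := Finset.mem_Ico.mp hbm
      have hsub : FA ⊆ Finset.Ico 1 (FA.max' hFA + 1) := by
        intro x hx
        obtain ⟨hxm, _⟩ := Finset.mem_filter.mp hx
        exact Finset.mem_Ico.mpr ⟨(Finset.mem_Ico.mp hxm).1, by
          have := Finset.le_max' _ _ hx; omega⟩
      have hcardA : FA.card ≤ FA.max' hFA := by
        have := Finset.card_le_card hsub
        rw [Nat.card_Ico] at this
        omega
      have hsub' : FB ⊆ Finset.Ico (FB.min' hFB) n := by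
        intro x hx
        obtain ⟨hxm, _⟩ := Finset.mem_filter.mp hx
        exact Finset.mem_Ico.mpr ⟨Finset.min'_le _ _ hx, (Finset.mem_Ico.mp hxm).2⟩
      have hcardB : FB.card ≤ n - FB.min' hFB := by
        have := Finset.card_le_card hsub'
        rwa [Nat.card_Ico] at this
      have hgap := EtaAux.main_gap hsf hbn hPA hPB
      omega
  rw [div_le_iff₀ (by norm_num : (0:ℝ) < 4)]
  have : (w.length : ℝ) ≤ 4 * (CritFact.eta w : ℝ) := by exact_mod_cast hkey
  linarith
end

section
/- Let w be a square-free word over the ternary alphabet {0,1,2} of length n = |w|. If p and q are non-critical positions of w lying on opposite sides of the middle, i.e. p < n/2 < q, then q − p ≥ n/4. -/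
namespace CritFact

lemma aux_prefix_of_agree {l₁ l₂ : Word} (hlen : l₁.length ≤ l₂.length)
    (h : ∀ k, k < l₁.length → l₁[k]? = l₂[k]?) : l₁ <+: l₂ := by
  have he : l₁ = l₂.take l₁.length := by
    apply List.ext_getElem?
    intro k
    rcases lt_or_ge k l₁.length with hk | hk
    · rw [List.getElem?_take, if_pos hk, h k hk]
    · rw [List.getElem?_take, if_neg (not_lt.mpr hk), List.getElem?_eq_none hk]
  rw [he]; exact List.take_prefix _ _

lemma aux_no_square {w : Word} (hsf : SqFree w) {a t : ℕ} (ht : 1 ≤ t)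
    (hlen : a + 2*t ≤ w.length)
    (hper : ∀ j, a ≤ j → j < a + t → w[j]? = w[j+t]?) : False := by
  set v := (w.drop a).take t with hv
  have hdlen : (w.drop a).length = w.length - a := List.length_drop
  have hvlen : v.length = t := by
    rw [hv, List.length_take, hdlen]; omega
  have hvne : v ≠ [] := by
    intro h; rw [h] at hvlen; simp at hvlen; omega
  have heq : v ++ v = (w.drop a).take (2*t) := by
    apply List.ext_getElem?
    intro k
    rcases lt_or_ge k t with hk | hk
    · rw [List.getElem?_append_left (by omega)]
      simp only [hv, List.getElem?_take]
      rw [if_pos hk, if_pos (by omega : k < 2*t)]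
    · rcases lt_or_ge k (2*t) with hk2 | hk2
      · rw [List.getElem?_append_right (by omega)]
        rw [hvlen]; simp only [hv, List.getElem?_take]
        rw [if_pos (by omega : k - t < t), if_pos hk2, List.getElem?_drop, List.getElem?_drop]
        have h1 := hper (a + (k - t)) (by omega) (by omega)
        have e1 : a + (k - t) + t = a + k := by omega
        rw [e1] at h1
        exact h1
      · rw [List.getElem?_eq_none (by simp [hvlen]; omega),
          List.getElem?_eq_none (by rw [List.length_take]; omega)]
  have hinf : (v ++ v) <:+: w := by
    rw [heq]
    exact ((List.take_prefix _ _).isInfix).trans ((List.drop_suffix _ _).isInfix)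
  exact hsf v hvne hinf


lemma rep_spread {w : Word} {p : ℕ} {u : Word} (hu : IsRepWord w p u) (hp : p ≤ w.length) :
    ∀ j, p ≤ j + u.length → j < p → j + u.length < w.length → w[j]? = w[j + u.length]? := by
  obtain ⟨hne, hsuf, hpre⟩ := hu
  intro j h1 h2 h3
  have hxlen : (w.take p).length = p := by rw [List.length_take]; omega
  have hul : 1 ≤ u.length := List.length_pos_iff.mpr hne
  obtain ⟨r, hr⟩ : ∃ r, u.length = r := ⟨u.length, rfl⟩
  rw [hr] at h1 h3 ⊢
  -- step 1 : w[j]? = u[j + r - p]?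
  have step1 : w[j]? = u[j + r - p]? := by
    rcases hsuf with ⟨z, hz⟩ | ⟨z, hz⟩
    · -- z ++ u = w.take p,  r ≤ p
      have hzlen : z.length + r = p := by
        have := congrArg List.length hz; rw [List.length_append, hxlen, hr] at this; omega
      have e : (w.take p)[j]? = w[j]? := by rw [List.getElem?_take, if_pos h2]
      rw [← e, ← hz, List.getElem?_append_right (by omega)]
      congr 1
      omega
    · -- z ++ w.take p = u,  p ≤ r
      have hzlen : z.length + p = r := by
        have := congrArg List.length hz; rw [List.length_append, hxlen, hr] at this; omega
      have e : (w.take p)[j]? = w[j]? := by rw [List.getElem?_take, if_pos h2]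
      rw [← e, ← hz, List.getElem?_append_right (by omega)]
      congr 1
      omega
  -- step 2 : u[j + r - p]? = w[j + r]?
  have step2 : u[j + r - p]? = w[j + r]? := by
    have hidx : p + (j + r - p) = j + r := by omega
    rcases hpre with ⟨z, hz⟩ | ⟨z, hz⟩
    · -- u ++ z = w.drop p
      rw [← List.getElem?_append_left (l₂ := z) (by rw [hr]; omega), hz,
        List.getElem?_drop, hidx]
    · -- w.drop p ++ z = u
      have hdlen : (w.drop p).length = w.length - p := List.length_drop
      rw [← hz, List.getElem?_append_left (by omega), List.getElem?_drop, hidx]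
  rw [step1, step2]

lemma hasPeriod_length {w : Word} (hw : w ≠ []) : HasPeriod w w.length :=
  ⟨List.length_pos_iff.mpr hw, fun i hi => absurd hi (by omega)⟩

lemma per_hasPeriod {w : Word} (hw : w ≠ []) : HasPeriod w (per w) := by
  have h : w.length ∈ {q | HasPeriod w q} := hasPeriod_length hw
  exact Nat.sInf_mem ⟨w.length, h⟩

lemma locPer_spec {w : Word} {p : ℕ} (hp2 : p < w.length) :
    ∃ u : Word, IsRepWord w p u ∧ u.length = locPer w p := by
  have h0 : 0 < w.length := by omega
  have hne : {n | ∃ u : Word, IsRepWord w p u ∧ u.length = n}.Nonempty := by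
    refine ⟨(w.drop p ++ w.take p).length, w.drop p ++ w.take p, ⟨?_, ?_, ?_⟩, rfl⟩
    · intro h
      have := congrArg List.length h
      rw [List.length_append, List.length_drop, List.length_take] at this
      simp at this
      omega
    · exact Or.inr (List.suffix_append _ _)
    · exact Or.inr (List.prefix_append _ _)
  exact Nat.sInf_mem hne

lemma locPer_le_per {w : Word} {p : ℕ} (hp2 : p < w.length) :
    locPer w p ≤ per w := by
  have h0 : 0 < w.length := by omega
  have hwne : w ≠ [] := by intro h; rw [h] at h0; simp at h0
  have hPmem : HasPeriod w (per w) := per_hasPeriod hwne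
  have hP1 : 1 ≤ per w := hPmem.1
  have hPn : per w ≤ w.length := Nat.sInf_le (hasPeriod_length hwne)
  set n := w.length with hn
  set P := per w with hPdef
  apply Nat.sInf_le
  rcases le_or_gt P p with hc | hc
  · -- P ≤ p : u = (w.take p).drop (p - P)
    set u := (w.take p).drop (p - P) with hu
    have hulen : u.length = P := by
      rw [hu, List.length_drop, List.length_take]; omega
    have hune : u ≠ [] := by intro h; rw [h] at hulen; simp at hulen; omega
    have hget : ∀ k, k < P → u[k]? = w[p - P + k]? := by
      intro k hk
      rw [hu, List.getElem?_drop, List.getElem?_take, if_pos (by omega)]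
    have hagree : ∀ k, k < P → p + k < n → u[k]? = (w.drop p)[k]? := by
      intro k hk hk2
      rw [hget k hk, List.getElem?_drop]
      have := hPmem.2 (p - P + k) (by omega)
      have e : p - P + k + P = p + k := by omega
      rw [e] at this
      exact this
    refine ⟨u, ⟨hune, Or.inl (List.drop_suffix _ _), ?_⟩, hulen⟩
    rcases le_or_gt P (n - p) with hc2 | hc2
    · exact Or.inl (aux_prefix_of_agree (by rw [hulen, List.length_drop]; omega)
        (fun k hk => hagree k (by omega) (by rw [hulen] at hk; omega)))
    · refine Or.inr (aux_prefix_of_agree (by rw [hulen, List.length_drop]; omega) ?_)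
      intro k hk
      rw [List.length_drop] at hk
      exact (hagree k (by omega) (by omega)).symm
  · -- p < P : u = (w.drop p).take (P - p) ++ w.take p
    set u := (w.drop p).take (P - p) ++ w.take p with hu
    have hulen : u.length = P := by
      rw [hu, List.length_append, List.length_take, List.length_drop, List.length_take]; omega
    have hune : u ≠ [] := by intro h; rw [h] at hulen; simp at hulen; omega
    have hflen : ((w.drop p).take (P - p)).length = P - p := by
      rw [List.length_take, List.length_drop]; omega
    have hagree : ∀ k, k < P → p + k < n → u[k]? = (w.drop p)[k]? := by
      intro k hk hk2
      rcases lt_or_ge k (P - p) with hkc | hkc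
      · rw [hu, List.getElem?_append_left (by omega), List.getElem?_take, if_pos hkc]
      · rw [hu, List.getElem?_append_right (by omega), hflen, List.getElem?_take,
          if_pos (by omega), List.getElem?_drop]
        have := hPmem.2 (k - (P - p)) (by omega)
        have e : k - (P - p) + P = p + k := by omega
        rw [e] at this
        exact this
    refine ⟨u, ⟨hune, Or.inr (List.suffix_append _ _), ?_⟩, hulen⟩
    rcases le_or_gt P (n - p) with hc2 | hc2
    · exact Or.inl (aux_prefix_of_agree (by rw [hulen, List.length_drop]; omega)
        (fun k hk => hagree k (by omega) (by rw [hulen] at hk; omega)))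
    · refine Or.inr (aux_prefix_of_agree (by rw [hulen, List.length_drop]; omega) ?_)
      intro k hk
      rw [List.length_drop] at hk
      exact (hagree k (by omega) (by omega)).symm

-- side lemmas + main, to be appended after aux2 content (inside namespace CritFact until 'end')
lemma side_left {w : Word} (hsf : SqFree w) {p r : ℕ}
    (h2p : 2*p < w.length) (hp1 : 1 ≤ p) (hr1 : 1 ≤ r)
    (hnper : ¬ HasPeriod w r)
    (hrep : ∀ j, p ≤ j + r → j < p → j + r < w.length → w[j]? = w[j+r]?) :
    p < r ∧ p + r < w.length ∧ ∀ j, j < p → w[j]? = w[j + r]? := by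
  have hpr : p < r := by
    by_contra hle
    push_neg at hle
    exact aux_no_square hsf hr1 (a := p - r) (by omega)
      (fun j hj1 hj2 => hrep j (by omega) (by omega) (by omega))
  have hrn : p + r < w.length := by
    by_contra h
    push_neg at h
    exact hnper ⟨hr1, fun i hi => hrep i (by omega) (by omega) hi⟩
  exact ⟨hpr, hrn, fun j hj => hrep j (by omega) hj (by omega)⟩

lemma side_right {w : Word} (hsf : SqFree w) {q s : ℕ}
    (h2q : w.length < 2*q) (hq2 : q < w.length) (hs1 : 1 ≤ s)
    (hnper : ¬ HasPeriod w s)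
    (hrep : ∀ j, q ≤ j + s → j < q → j + s < w.length → w[j]? = w[j+s]?) :
    w.length < q + s ∧ s < q ∧ ∀ j, q ≤ j + s → j + s < w.length → w[j]? = w[j+s]? := by
  have h1 : w.length < q + s := by
    by_contra h
    push_neg at h
    exact aux_no_square hsf hs1 (a := q - s) (by omega)
      (fun j hj1 hj2 => hrep j (by omega) (by omega) (by omega))
  have h2 : s < q := by
    by_contra h
    push_neg at h
    exact hnper ⟨hs1, fun i hi => hrep i (by omega) (by omega) hi⟩
  exact ⟨h1, h2, fun j hj1 hj2 => hrep j hj1 (by omega) hj2⟩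

end CritFact

/-- in a square-free ternary word `w` of length `n`, two non-critical
positions `p < n/2 < q` on opposite sides of the middle satisfy `q - p ≥ n/4`. -/
theorem noncritical_points_far_apart (w : CritFact.Word)
    (hsf : CritFact.SqFree w) (p q : ℕ)
    (hp : CritFact.IsPos w p) (hq : CritFact.IsPos w q)
    (hpnc : ¬ CritFact.IsCritical w p) (hqnc : ¬ CritFact.IsCritical w q)
    (h1 : (p : ℝ) < (w.length : ℝ) / 2) (h2 : (w.length : ℝ) / 2 < (q : ℝ)) :
    (w.length : ℝ) / 4 ≤ (q : ℝ) - (p : ℝ) := by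
  open CritFact in
  obtain ⟨hp1, hp2⟩ := hp
  obtain ⟨hq1, hq2⟩ := hq
  by_contra hcon
  push_neg at hcon
  have h2p : 2*p < w.length := by
    have : ((2*p : ℕ) : ℝ) < (w.length : ℝ) := by push_cast; linarith
    exact_mod_cast this
  have h2q : w.length < 2*q := by
    have : ((w.length : ℕ) : ℝ) < ((2*q : ℕ) : ℝ) := by push_cast; linarith
    exact_mod_cast this
  have h4 : 4*q < w.length + 4*p := by
    have : ((4*q : ℕ) : ℝ) < ((w.length + 4*p : ℕ) : ℝ) := by push_cast; linarith
    exact_mod_cast this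
  have hwne : w ≠ [] := by
    intro h
    rw [h] at hp2
    simp at hp2
  -- facts about p
  obtain ⟨u, hu, hulen⟩ := CritFact.locPer_spec hp2
  have hr1 : 1 ≤ locPer w p := by
    rw [← hulen]; exact List.length_pos_iff.mpr hu.1
  have hrne : locPer w p ≠ per w := fun h => hpnc ⟨⟨hp1, hp2⟩, h⟩
  have hrP : locPer w p < per w := lt_of_le_of_ne (locPer_le_per hp2) hrne
  have hnr : ¬ HasPeriod w (locPer w p) := by
    intro h
    have hle : per w ≤ locPer w p := Nat.sInf_le h
    omega
  have hrepp : ∀ j, p ≤ j + locPer w p → j < p → j + locPer w p < w.length →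
      w[j]? = w[j + locPer w p]? := by
    have := rep_spread hu hp2.le
    rw [hulen] at this
    exact this
  obtain ⟨hpr, hprn, hP⟩ := side_left hsf h2p hp1 hr1 hnr hrepp
  -- facts about q
  obtain ⟨v, hv, hvlen⟩ := CritFact.locPer_spec hq2
  have hs1 : 1 ≤ locPer w q := by
    rw [← hvlen]; exact List.length_pos_iff.mpr hv.1
  have hsne : locPer w q ≠ per w := fun h => hqnc ⟨⟨hq1, hq2⟩, h⟩
  have hsP : locPer w q < per w := lt_of_le_of_ne (locPer_le_per hq2) hsne
  have hns : ¬ HasPeriod w (locPer w q) := by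
    intro h
    have hle : per w ≤ locPer w q := Nat.sInf_le h
    omega
  have hrepq : ∀ j, q ≤ j + locPer w q → j < q → j + locPer w q < w.length →
      w[j]? = w[j + locPer w q]? := by
    have := rep_spread hv hq2.le
    rw [hvlen] at this
    exact this
  obtain ⟨hqs, hsq, hQ⟩ := side_right hsf h2q hq2 hs1 hns hrepq
  set n := w.length with hn
  set r := locPer w p with hrdef
  set s := locPer w q with hsdef
  -- h2p : 2p < n, h2q : n < 2q, h4 : 4q < n + 4p
  -- hpr : p < r, hprn : p + r < n, hqs : n < q + s, hsq : s < q
  rcases lt_trichotomy r s with hlt | heq | hgt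
  · -- r < s : local period t = s - r near q - t
    refine aux_no_square hsf (t := s - r) (a := q - (s - r)) (by omega) (by omega) ?_
    intro j hj1 hj2
    have hjr : j - r + r = j := by omega
    have hjs : j - r + s = j + (s - r) := by omega
    calc w[j]? = w[j - r + r]? := by rw [hjr]
      _ = w[j - r]? := (hP (j - r) (by omega)).symm
      _ = w[j - r + s]? := hQ (j - r) (by omega) (by omega)
      _ = w[j + (s - r)]? := by rw [hjs]
  · -- r = s : w has period r, contradiction
    refine hnr ⟨hr1, fun i hi => ?_⟩
    rcases lt_or_ge i p with hip | hip
    · exact hP i hip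
    · have h := hQ i (by omega) (by omega)
      rw [← heq] at h
      exact h
  · -- s < r : local period t = r - s near q - r
    refine aux_no_square hsf (t := r - s) (a := q - r) (by omega) (by omega) ?_
    intro j hj1 hj2
    have e1 : w[j]? = w[j + r]? := hP j (by omega)
    have e2 : w[j + (r - s)]? = w[j + (r - s) + s]? := hQ (j + (r - s)) (by omega) (by omega)
    have e3 : j + (r - s) + s = j + r := by omega
    rw [e3] at e2
    rw [e1, ← e2]
end

section
/- Let x be a nonempty word over {0,1,2} such that the word w_x = 0x02x10x02x0 is square-free. Then the critical points of w_x are exactly the positions p with 2|x|+4 ≤ p ≤ 3|x|+6, so η(w_x) = |x| + 3; consequently η(w_x)/|w_x| = (|x|+3)/(4|x|+8) = 1/4 + 1/|w_x|. -/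
namespace WxP
open CritFact

theorem fin3 (d : Fin 3) : d = 0 ∨ d = 1 ∨ d = 2 := by fin_cases d <;> simp

theorem getElem?_take' {α} (l : List α) {n i : ℕ} (h : i < n) : (l.take n)[i]? = l[i]? := by
  rw [List.getElem?_take]; exact if_pos h

theorem infix_slice {α} (w : List α) (a k : ℕ) : ((w.drop a).take k) <:+: w :=
  ⟨w.take a, (w.drop a).drop k, by rw [List.append_assoc, List.take_append_drop, List.take_append_drop]⟩

theorem sq_contra {w : Word} (hsf : SqFree w) (a d : ℕ) (hd : 0 < d)
    (hb : a + d + d ≤ w.length) (h : ∀ s, s < d → w[a+s]? = w[a+d+s]?) : False := by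
  have hlen : ((w.drop a).take d).length = d := by
    simp only [List.length_take, List.length_drop]; omega
  apply hsf ((w.drop a).take d) (by intro hh; rw [hh] at hlen; simp at hlen; omega)
  have he : (w.drop a).take d ++ (w.drop a).take d = (w.drop a).take (d+d) := by
    rw [List.take_add]
    congr 1
    rw [List.drop_drop]
    apply List.ext_getElem?
    intro i
    by_cases hi : i < d
    · rw [getElem?_take' _ hi, getElem?_take' _ hi, List.getElem?_drop, List.getElem?_drop]
      exact h i hi
    · rw [List.getElem?_eq_none, List.getElem?_eq_none] <;>
        simp only [List.length_take, List.length_drop] <;> omega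
  rw [he]; exact infix_slice w a (d+d)

theorem hw (x : Word) : wx x =
    [0] ++ (x ++ ([0,2] ++ (x ++ ([1,0] ++ (x ++ ([0,2] ++ (x ++ [0]))))))) := by
  simp [wx]

theorem wlen (x : Word) : (wx x).length = 4*x.length+8 := by
  simp [wx]; omega

theorem peel {α} (l₁ : List α) {l₂ : List α} {i : ℕ} (j : ℕ) (h : i = l₁.length + j) :
    (l₁ ++ l₂)[i]? = l₂[j]? := by
  rw [List.getElem?_append_right (by omega)]; congr 1; omega

theorem cell0 (x : Word) (i : ℕ) (hi : i = 0) : (wx x)[i]? = some 0 := by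
  subst hi; rw [hw]; simp

theorem cellA (x : Word) (i j : ℕ) (hj : j < x.length) (hi : i = 1+j) : (wx x)[i]? = x[j]? := by
  rw [hw, peel [0] j (by simp only [List.length_cons, List.length_nil, List.length_singleton]; try omega), List.getElem?_append_left hj]

theorem cellS1 (x : Word) (i : ℕ) (hi : i = x.length+1) : (wx x)[i]? = some 0 := by
  rw [hw, peel [0] x.length (by simp only [List.length_cons, List.length_nil, List.length_singleton]; try omega), peel x 0 (by omega)]; simp

theorem cellS2 (x : Word) (i : ℕ) (hi : i = x.length+2) : (wx x)[i]? = some 2 := by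
  rw [hw, peel [0] (x.length+1) (by simp only [List.length_cons, List.length_nil, List.length_singleton]; try omega), peel x 1 (by omega)]; simp

theorem cellB (x : Word) (i j : ℕ) (hj : j < x.length) (hi : i = x.length+3+j) :
    (wx x)[i]? = x[j]? := by
  rw [hw, peel [0] (x.length+2+j) (by simp only [List.length_cons, List.length_nil, List.length_singleton]; try omega), peel x (2+j) (by omega),
    peel [0,2] j (by simp only [List.length_cons, List.length_nil, List.length_singleton]; try omega), List.getElem?_append_left hj]

theorem cellS3 (x : Word) (i : ℕ) (hi : i = 2*x.length+3) : (wx x)[i]? = some 1 := by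
  rw [hw, peel [0] (2*x.length+2) (by simp only [List.length_cons, List.length_nil, List.length_singleton]; try omega), peel x (x.length+2) (by omega),
    peel [0,2] x.length (by simp only [List.length_cons, List.length_nil, List.length_singleton]; try omega), peel x 0 (by omega)]; simp

theorem cellS4 (x : Word) (i : ℕ) (hi : i = 2*x.length+4) : (wx x)[i]? = some 0 := by
  rw [hw, peel [0] (2*x.length+3) (by simp only [List.length_cons, List.length_nil, List.length_singleton]; try omega), peel x (x.length+3) (by omega),
    peel [0,2] (x.length+1) (by simp only [List.length_cons, List.length_nil, List.length_singleton]; try omega), peel x 1 (by omega)]; simp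

theorem cellC (x : Word) (i j : ℕ) (hj : j < x.length) (hi : i = 2*x.length+5+j) :
    (wx x)[i]? = x[j]? := by
  rw [hw, peel [0] (2*x.length+4+j) (by simp only [List.length_cons, List.length_nil, List.length_singleton]; try omega), peel x (x.length+4+j) (by omega),
    peel [0,2] (x.length+2+j) (by simp only [List.length_cons, List.length_nil, List.length_singleton]; try omega), peel x (2+j) (by omega),
    peel [1,0] j (by simp only [List.length_cons, List.length_nil, List.length_singleton]; try omega), List.getElem?_append_left hj]

theorem cellS5 (x : Word) (i : ℕ) (hi : i = 3*x.length+5) : (wx x)[i]? = some 0 := by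
  rw [hw, peel [0] (3*x.length+4) (by simp only [List.length_cons, List.length_nil, List.length_singleton]; try omega), peel x (2*x.length+4) (by omega),
    peel [0,2] (2*x.length+2) (by simp only [List.length_cons, List.length_nil, List.length_singleton]; try omega), peel x (x.length+2) (by omega),
    peel [1,0] x.length (by simp only [List.length_cons, List.length_nil, List.length_singleton]; try omega), peel x 0 (by omega)]; simp

theorem cellS6 (x : Word) (i : ℕ) (hi : i = 3*x.length+6) : (wx x)[i]? = some 2 := by
  rw [hw, peel [0] (3*x.length+5) (by simp only [List.length_cons, List.length_nil, List.length_singleton]; try omega), peel x (2*x.length+5) (by omega),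
    peel [0,2] (2*x.length+3) (by simp only [List.length_cons, List.length_nil, List.length_singleton]; try omega), peel x (x.length+3) (by omega),
    peel [1,0] (x.length+1) (by simp only [List.length_cons, List.length_nil, List.length_singleton]; try omega), peel x 1 (by omega)]; simp

theorem cellD (x : Word) (i j : ℕ) (hj : j < x.length) (hi : i = 3*x.length+7+j) :
    (wx x)[i]? = x[j]? := by
  rw [hw, peel [0] (3*x.length+6+j) (by simp only [List.length_cons, List.length_nil, List.length_singleton]; try omega), peel x (2*x.length+6+j) (by omega),
    peel [0,2] (2*x.length+4+j) (by simp only [List.length_cons, List.length_nil, List.length_singleton]; try omega), peel x (x.length+4+j) (by omega),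
    peel [1,0] (x.length+2+j) (by simp only [List.length_cons, List.length_nil, List.length_singleton]; try omega), peel x (2+j) (by omega),
    peel [0,2] j (by simp only [List.length_cons, List.length_nil, List.length_singleton]; try omega), List.getElem?_append_left hj]

theorem cellS7 (x : Word) (i : ℕ) (hi : i = 4*x.length+7) : (wx x)[i]? = some 0 := by
  rw [hw, peel [0] (4*x.length+6) (by simp only [List.length_cons, List.length_nil, List.length_singleton]; try omega), peel x (3*x.length+6) (by omega),
    peel [0,2] (3*x.length+4) (by simp only [List.length_cons, List.length_nil, List.length_singleton]; try omega), peel x (2*x.length+4) (by omega),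
    peel [1,0] (2*x.length+2) (by simp only [List.length_cons, List.length_nil, List.length_singleton]; try omega), peel x (x.length+2) (by omega),
    peel [0,2] x.length (by simp only [List.length_cons, List.length_nil, List.length_singleton]; try omega), peel x 0 (by omega)]; simp


section Letters
variable {x : Word} (hsf : SqFree (wx x))

theorem x0 (hsf : SqFree (wx x)) (hn : 1 ≤ x.length) : x[0]? = some 1 := by
  have h0 : 0 < x.length := hn
  have hg : x[0]? = some (x[0]'h0) := List.getElem?_eq_getElem h0
  rcases fin3 (x[0]'h0) with h|h|h
  · exfalso
    refine sq_contra hsf 0 1 one_pos (by rw [wlen]; omega) ?_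
    intro s hs; interval_cases s
    exact (cell0 x _ (by omega)).trans ((cellA x _ 0 h0 (by omega)).trans (hg.trans (by rw [h]))).symm
  · rw [hg, h]
  · exfalso
    refine sq_contra hsf (x.length+2) 1 one_pos (by rw [wlen]; omega) ?_
    intro s hs; interval_cases s
    exact (cellS2 x _ (by omega)).trans ((cellB x _ 0 h0 (by omega)).trans (hg.trans (by rw [h]))).symm

theorem xl1 (hsf : SqFree (wx x)) (hn : 1 ≤ x.length) : x[x.length-1]? = some 2 := by
  have h0 : x.length-1 < x.length := by omega
  have hg : x[x.length-1]? = some (x[x.length-1]'h0) := List.getElem?_eq_getElem h0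
  rcases fin3 (x[x.length-1]'h0) with h|h|h
  · exfalso
    refine sq_contra hsf x.length 1 one_pos (by rw [wlen]; omega) ?_
    intro s hs; interval_cases s
    exact ((cellA x _ (x.length-1) h0 (by omega)).trans (hg.trans (by rw [h]))).trans
      (cellS1 x _ (by omega)).symm
  · exfalso
    refine sq_contra hsf (2*x.length+2) 1 one_pos (by rw [wlen]; omega) ?_
    intro s hs; interval_cases s
    exact ((cellB x _ (x.length-1) h0 (by omega)).trans (hg.trans (by rw [h]))).trans
      (cellS3 x _ (by omega)).symm
  · rw [hg, h]

theorem x1 (hsf : SqFree (wx x)) (hn : 2 ≤ x.length) : x[1]? = some 2 := by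
  have h0 : 1 < x.length := hn
  have hg : x[1]? = some (x[1]'h0) := List.getElem?_eq_getElem h0
  rcases fin3 (x[1]'h0) with h|h|h
  · exfalso
    refine sq_contra hsf (2*x.length+3) 2 two_pos (by rw [wlen]; omega) ?_
    intro s hs; interval_cases s
    · exact (cellS3 x _ (by omega)).trans ((cellC x _ 0 (by omega) (by omega)).trans
        (x0 hsf (by omega))).symm
    · exact (cellS4 x _ (by omega)).trans ((cellC x _ 1 h0 (by omega)).trans
        (hg.trans (by rw [h]))).symm
  · exfalso
    refine sq_contra hsf 1 1 one_pos (by rw [wlen]; omega) ?_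
    intro s hs; interval_cases s
    exact ((cellA x _ 0 (by omega) (by omega)).trans (x0 hsf (by omega))).trans
      ((cellA x _ 1 h0 (by omega)).trans (hg.trans (by rw [h]))).symm
  · rw [hg, h]

theorem xl2 (hsf : SqFree (wx x)) (hn : 2 ≤ x.length) : x[x.length-2]? = some 1 := by
  have h0 : x.length-2 < x.length := by omega
  have hg : x[x.length-2]? = some (x[x.length-2]'h0) := List.getElem?_eq_getElem h0
  rcases fin3 (x[x.length-2]'h0) with h|h|h
  · exfalso
    refine sq_contra hsf (3*x.length+3) 2 two_pos (by rw [wlen]; omega) ?_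
    intro s hs; interval_cases s
    · exact ((cellC x _ (x.length-2) h0 (by omega)).trans (hg.trans (by rw [h]))).trans
        (cellS5 x _ (by omega)).symm
    · exact ((cellC x _ (x.length-1) (by omega) (by omega)).trans (xl1 hsf (by omega))).trans
        (cellS6 x _ (by omega)).symm
  · rw [hg, h]
  · exfalso
    refine sq_contra hsf (2*x.length+1) 1 one_pos (by rw [wlen]; omega) ?_
    intro s hs; interval_cases s
    exact ((cellB x _ (x.length-2) h0 (by omega)).trans (hg.trans (by rw [h]))).trans
      ((cellB x _ (x.length-1) (by omega) (by omega)).trans (xl1 hsf (by omega))).symm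

theorem x2 (hsf : SqFree (wx x)) (hn : 3 ≤ x.length) : x[2]? = some 0 := by
  have h0 : 2 < x.length := hn
  have hg : x[2]? = some (x[2]'h0) := List.getElem?_eq_getElem h0
  rcases fin3 (x[2]'h0) with h|h|h
  · rw [hg, h]
  · exfalso
    refine sq_contra hsf (x.length+2) 2 two_pos (by rw [wlen]; omega) ?_
    intro s hs; interval_cases s
    · exact (cellS2 x _ (by omega)).trans ((cellB x _ 1 (by omega) (by omega)).trans
        (x1 hsf (by omega))).symm
    · exact ((cellB x _ 0 (by omega) (by omega)).trans (x0 hsf (by omega))).trans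
        ((cellB x _ 2 h0 (by omega)).trans (hg.trans (by rw [h]))).symm
  · exfalso
    refine sq_contra hsf 2 1 one_pos (by rw [wlen]; omega) ?_
    intro s hs; interval_cases s
    exact ((cellA x _ 1 (by omega) (by omega)).trans (x1 hsf (by omega))).trans
      ((cellA x _ 2 h0 (by omega)).trans (hg.trans (by rw [h]))).symm

theorem xl3 (hsf : SqFree (wx x)) (hn : 3 ≤ x.length) : x[x.length-3]? = some 0 := by
  have h0 : x.length-3 < x.length := by omega
  have hg : x[x.length-3]? = some (x[x.length-3]'h0) := List.getElem?_eq_getElem h0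
  rcases fin3 (x[x.length-3]'h0) with h|h|h
  · rw [hg, h]
  · exfalso
    refine sq_contra hsf (2*x.length) 1 one_pos (by rw [wlen]; omega) ?_
    intro s hs; interval_cases s
    exact ((cellB x _ (x.length-3) h0 (by omega)).trans (hg.trans (by rw [h]))).trans
      ((cellB x _ (x.length-2) (by omega) (by omega)).trans (xl2 hsf (by omega))).symm
  · exfalso
    refine sq_contra hsf (2*x.length) 2 two_pos (by rw [wlen]; omega) ?_
    intro s hs; interval_cases s
    · exact ((cellB x _ (x.length-3) h0 (by omega)).trans (hg.trans (by rw [h]))).trans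
        ((cellB x _ (x.length-1) (by omega) (by omega)).trans (xl1 hsf (by omega))).symm
    · exact ((cellB x _ (x.length-2) (by omega) (by omega)).trans (xl2 hsf (by omega))).trans
        (cellS3 x _ (by omega)).symm

theorem xl4 (hsf : SqFree (wx x)) (hn : 4 ≤ x.length) : x[x.length-4]? = some 2 := by
  have h0 : x.length-4 < x.length := by omega
  have hg : x[x.length-4]? = some (x[x.length-4]'h0) := List.getElem?_eq_getElem h0
  rcases fin3 (x[x.length-4]'h0) with h|h|h
  · exfalso
    refine sq_contra hsf (2*x.length-1) 1 one_pos (by rw [wlen]; omega) ?_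
    intro s hs; interval_cases s
    exact ((cellB x _ (x.length-4) h0 (by omega)).trans (hg.trans (by rw [h]))).trans
      ((cellB x _ (x.length-3) (by omega) (by omega)).trans (xl3 hsf (by omega))).symm
  · exfalso
    refine sq_contra hsf (2*x.length-1) 4 (by omega) (by rw [wlen]; omega) ?_
    intro s hs; interval_cases s
    · exact ((cellB x _ (x.length-4) h0 (by omega)).trans (hg.trans (by rw [h]))).trans
        (cellS3 x _ (by omega)).symm
    · exact ((cellB x _ (x.length-3) (by omega) (by omega)).trans (xl3 hsf (by omega))).trans
        (cellS4 x _ (by omega)).symm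
    · exact ((cellB x _ (x.length-2) (by omega) (by omega)).trans (xl2 hsf (by omega))).trans
        ((cellC x _ 0 (by omega) (by omega)).trans (x0 hsf (by omega))).symm
    · exact ((cellB x _ (x.length-1) (by omega) (by omega)).trans (xl1 hsf (by omega))).trans
        ((cellC x _ 1 (by omega) (by omega)).trans (x1 hsf (by omega))).symm
  · rw [hg, h]

theorem optabs {a b : Fin 3} (h : (some a : Option (Fin 3)) = some b) (hne : a ≠ b) : False :=
  hne (Option.some_injective _ h)

theorem nine (hx : x ≠ []) (hsf : SqFree (wx x)) : 9 ≤ x.length := by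
  have h1 : 1 ≤ x.length := by
    cases x with
    | nil => exact absurd rfl hx
    | cons a l => simp
  by_contra hcon
  push_neg at hcon
  interval_cases hxe : x.length
  · -- n = 1
    have e1 := x0 hsf (by omega)
    have e2 := xl1 hsf (by omega)
    rw [show x.length - 1 = 0 from by omega] at e2
    exact optabs (e1.symm.trans e2) (by decide)
  · -- n = 2
    refine sq_contra hsf (x.length+2) 2 two_pos (by rw [wlen]; omega) ?_
    intro s hs; interval_cases s
    · exact (cellS2 x _ (by omega)).trans ((cellB x _ 1 (by omega) (by omega)).trans
        ((show x[1]? = some 2 by have := xl1 hsf (by omega); rwa [show x.length-1 = 1 from by omega] at this))).symm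
    · exact ((cellB x _ 0 (by omega) (by omega)).trans (x0 hsf (by omega))).trans
        (cellS3 x _ (by omega)).symm
  · -- n = 3
    have e1 := x2 hsf (by omega)
    have e2 := xl1 hsf (by omega)
    rw [show x.length - 1 = 2 from by omega] at e2
    exact optabs (e1.symm.trans e2) (by decide)
  · -- n = 4
    have e1 := x2 hsf (by omega)
    have e2 := xl2 hsf (by omega)
    rw [show x.length - 2 = 2 from by omega] at e2
    exact optabs (e1.symm.trans e2) (by decide)
  · -- n = 5
    have e2 := x2 hsf (by omega)
    have e3 := xl2 hsf (by omega)
    rw [show x.length - 2 = 3 from by omega] at e3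
    have e4 := xl1 hsf (by omega)
    rw [show x.length - 1 = 4 from by omega] at e4
    refine sq_contra hsf 0 3 (by omega) (by rw [wlen]; omega) ?_
    intro s hs; interval_cases s
    · exact (cell0 x _ (by omega)).trans ((cellA x _ 2 (by omega) (by omega)).trans e2).symm
    · exact ((cellA x _ 0 (by omega) (by omega)).trans (x0 hsf (by omega))).trans
        ((cellA x _ 3 (by omega) (by omega)).trans e3).symm
    · exact ((cellA x _ 1 (by omega) (by omega)).trans (x1 hsf (by omega))).trans
        ((cellA x _ 4 (by omega) (by omega)).trans e4).symm
  · -- n = 6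
    have e1 := x2 hsf (by omega)
    have e2 := xl4 hsf (by omega)
    rw [show x.length - 4 = 2 from by omega] at e2
    exact optabs (e1.symm.trans e2) (by decide)
  · -- n = 7
    have e1 := x2 hsf (by omega)
    have e2 := xl4 hsf (by omega)
    rw [show x.length - 4 = 3 from by omega] at e2
    have e3 := xl3 hsf (by omega)
    rw [show x.length - 3 = 4 from by omega] at e3
    refine sq_contra hsf 2 2 two_pos (by rw [wlen]; omega) ?_
    intro s hs; interval_cases s
    · exact ((cellA x _ 1 (by omega) (by omega)).trans (x1 hsf (by omega))).trans
        ((cellA x _ 3 (by omega) (by omega)).trans e2).symm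
    · exact ((cellA x _ 2 (by omega) (by omega)).trans e1).trans
        ((cellA x _ 4 (by omega) (by omega)).trans e3).symm
  · -- n = 8
    have e1 := x2 hsf (by omega)
    have e2 := xl4 hsf (by omega)
    rw [show x.length - 4 = 4 from by omega] at e2
    have e3 := xl3 hsf (by omega)
    rw [show x.length - 3 = 5 from by omega] at e3
    have h0 : 3 < x.length := by omega
    have hg : x[3]? = some (x[3]'h0) := List.getElem?_eq_getElem h0
    rcases fin3 (x[3]'h0) with h|h|h
    · refine sq_contra hsf 3 1 one_pos (by rw [wlen]; omega) ?_
      intro s hs; interval_cases s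
      exact ((cellA x _ 2 (by omega) (by omega)).trans e1).trans
        ((cellA x _ 3 h0 (by omega)).trans (hg.trans (by rw [h]))).symm
    · refine sq_contra hsf 1 3 (by omega) (by rw [wlen]; omega) ?_
      intro s hs; interval_cases s
      · exact ((cellA x _ 0 (by omega) (by omega)).trans (x0 hsf (by omega))).trans
          ((cellA x _ 3 h0 (by omega)).trans (hg.trans (by rw [h]))).symm
      · exact ((cellA x _ 1 (by omega) (by omega)).trans (x1 hsf (by omega))).trans
          ((cellA x _ 4 (by omega) (by omega)).trans e2).symm
      · exact ((cellA x _ 2 (by omega) (by omega)).trans e1).trans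
          ((cellA x _ 5 (by omega) (by omega)).trans e3).symm
    · refine sq_contra hsf 4 1 one_pos (by rw [wlen]; omega) ?_
      intro s hs; interval_cases s
      exact ((cellA x _ 3 h0 (by omega)).trans (hg.trans (by rw [h]))).trans
        ((cellA x _ 4 (by omega) (by omega)).trans e2).symm

end Letters

section Period
variable {x : Word}

theorem S1 (x : Word) (i j : ℕ) (hj : j ≤ 2*x.length+2) (hi : i = 2*x.length+4+j) :
    (wx x)[i]? = (wx x)[j]? := by
  rcases (show j = 0 ∨ (1 ≤ j ∧ j ≤ x.length) ∨ j = x.length+1 ∨ j = x.length+2 ∨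
      (x.length+3 ≤ j ∧ j ≤ 2*x.length+2) from by omega) with h|⟨h,h'⟩|h|h|⟨h,h'⟩
  · exact (cellS4 x _ (by omega)).trans (cell0 x _ (by omega)).symm
  · exact (cellC x _ (j-1) (by omega) (by omega)).trans (cellA x _ (j-1) (by omega) (by omega)).symm
  · exact (cellS5 x _ (by omega)).trans (cellS1 x _ (by omega)).symm
  · exact (cellS6 x _ (by omega)).trans (cellS2 x _ (by omega)).symm
  · exact (cellD x _ (j-x.length-3) (by omega) (by omega)).trans
      (cellB x _ (j-x.length-3) (by omega) (by omega)).symm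

theorem S2 (x : Word) (i j : ℕ) (h1 : 2*x.length+5 ≤ j) (h2 : j ≤ 3*x.length+5)
    (hi : i = j+(x.length+2)) : (wx x)[j]? = (wx x)[i]? := by
  rcases (show (2*x.length+5 ≤ j ∧ j ≤ 3*x.length+4) ∨ j = 3*x.length+5 from by omega)
    with ⟨h,h'⟩|h
  · exact (cellC x _ (j-2*x.length-5) (by omega) (by omega)).trans
      (cellD x _ (j-2*x.length-5) (by omega) (by omega)).symm
  · exact (cellS5 x _ (by omega)).trans (cellS7 x _ (by omega)).symm

theorem hasPeriod_main (hx : x ≠ []) (hsf : SqFree (wx x)) :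
    HasPeriod (wx x) (4*x.length+4) := by
  have h9 := nine hx hsf
  refine ⟨by omega, ?_⟩
  intro i hi
  rw [wlen] at hi
  have hi3 : i ≤ 3 := by omega
  interval_cases i
  · exact (cell0 x _ (by omega)).trans
      ((cellD x _ (x.length-3) (by omega) (by omega)).trans (xl3 hsf (by omega))).symm
  · exact ((cellA x _ 0 (by omega) (by omega)).trans (x0 hsf (by omega))).trans
      ((cellD x _ (x.length-2) (by omega) (by omega)).trans (xl2 hsf (by omega))).symm
  · exact ((cellA x _ 1 (by omega) (by omega)).trans (x1 hsf (by omega))).trans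
      ((cellD x _ (x.length-1) (by omega) (by omega)).trans (xl1 hsf (by omega))).symm
  · exact ((cellA x _ 2 (by omega) (by omega)).trans (x2 hsf (by omega))).trans
      (cellS7 x _ (by omega)).symm

theorem noPeriod (hx : x ≠ []) (hsf : SqFree (wx x)) (q : ℕ) (hq0 : 0 < q)
    (hq4 : q < 4*x.length+4) : ¬ HasPeriod (wx x) q := by
  have h9 := nine hx hsf
  rintro ⟨-, hp⟩
  rw [wlen] at hp
  by_cases hq1 : q ≤ 2*x.length+4
  · refine sq_contra hsf 0 q hq0 (by rw [wlen]; omega) ?_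
    intro s hs
    have e := hp s (by omega)
    have e1 : 0+s = s := by omega
    have e2 : 0+q+s = s+q := by omega
    rw [e1, e2]; exact e
  · by_cases hq2 : q ≤ 3*x.length+6
    · refine sq_contra hsf (2*x.length+4) (q-(2*x.length+4)) (by omega) (by rw [wlen]; omega) ?_
      intro s hs
      have e2 := hp s (by omega)
      have e3 : 2*x.length+4+(q-(2*x.length+4))+s = s + q := by omega
      rw [e3]
      exact (S1 x (2*x.length+4+s) s (by omega) (by omega)).trans e2
    · -- k = q - (3n+6) ∈ [1, n-3]
      have hk1 : 1 ≤ q - (3*x.length+6) := by omega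
      have hk3 : q - (3*x.length+6) ≤ x.length-3 := by omega
      set k := q - (3*x.length+6) with hkdef
      have hd0 : x[k-1]? = some 0 := by
        have e := hp 0 (by omega)
        rw [cell0 x 0 rfl] at e
        rw [cellD x (0+q) (k-1) (by omega) (by omega)] at e
        exact e.symm
      have hshift : ∀ t, 1 ≤ t → t ≤ x.length - k → x[t-1]? = x[t+k-1]? := by
        intro t ht1 ht2
        have e := hp t (by omega)
        rw [cellA x t (t-1) (by omega) (by omega)] at e
        rw [cellD x (t+q) (t+k-1) (by omega) (by omega)] at e
        exact e
      have hnk : x[x.length-k]? = some 0 := by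
        have e := hp (x.length+1-k) (by omega)
        rw [cellA x (x.length+1-k) (x.length-k) (by omega) (by omega)] at e
        rw [cellS7 x (x.length+1-k+q) (by omega)] at e
        exact e
      rcases (show k = 1 ∨ k = 2 ∨ k = x.length-3 ∨ (3 ≤ k ∧ k ≤ x.length-4) from by omega)
        with h|h|h|⟨h3,h4⟩
      · rw [show x.length-k = x.length-1 from by omega, xl1 hsf (by omega)] at hnk
        exact optabs hnk (by decide)
      · rw [show x.length-k = x.length-2 from by omega, xl2 hsf (by omega)] at hnk
        exact optabs hnk (by decide)
      · have e := hshift 1 le_rfl (by omega)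
        rw [show (1:ℕ)-1 = 0 from rfl, show 1+k-1 = x.length-3 from by omega,
          x0 hsf (by omega), xl3 hsf (by omega)] at e
        exact optabs e (by decide)
      · have f1 : x[x.length-k-4]? = some 2 := by
          have e := hshift (x.length-k-3) (by omega) (by omega)
          rwa [show x.length-k-3-1 = x.length-k-4 from by omega,
            show x.length-k-3+k-1 = x.length-4 from by omega, xl4 hsf (by omega)] at e
        have f2 : x[x.length-k-3]? = some 0 := by
          have e := hshift (x.length-k-2) (by omega) (by omega)
          rwa [show x.length-k-2-1 = x.length-k-3 from by omega,
            show x.length-k-2+k-1 = x.length-3 from by omega, xl3 hsf (by omega)] at e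
        have f3 : x[x.length-k-2]? = some 1 := by
          have e := hshift (x.length-k-1) (by omega) (by omega)
          rwa [show x.length-k-1-1 = x.length-k-2 from by omega,
            show x.length-k-1+k-1 = x.length-2 from by omega, xl2 hsf (by omega)] at e
        have f4 : x[x.length-k-1]? = some 2 := by
          have e := hshift (x.length-k) (by omega) (by omega)
          rwa [show x.length-k-1 = x.length-k-1 from rfl,
            show x.length-k+k-1 = x.length-1 from by omega, xl1 hsf (by omega)] at e
        have hlt : x.length-k+1 < x.length := by omega
        have hg : x[x.length-k+1]? = some (x[x.length-k+1]'hlt) := List.getElem?_eq_getElem hlt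
        rcases fin3 (x[x.length-k+1]'hlt) with h|h|h
        · refine sq_contra hsf (x.length-k+1) 1 one_pos (by rw [wlen]; omega) ?_
          intro s hs; interval_cases s
          exact ((cellA x _ (x.length-k) (by omega) (by omega)).trans hnk).trans
            ((cellA x _ (x.length-k+1) hlt (by omega)).trans (hg.trans (by rw [h]))).symm
        · refine sq_contra hsf (x.length-k-3) 3 (by omega) (by rw [wlen]; omega) ?_
          intro s hs; interval_cases s
          · exact ((cellA x _ (x.length-k-4) (by omega) (by omega)).trans f1).trans
              ((cellA x _ (x.length-k-1) (by omega) (by omega)).trans f4).symm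
          · exact ((cellA x _ (x.length-k-3) (by omega) (by omega)).trans f2).trans
              ((cellA x _ (x.length-k) (by omega) (by omega)).trans hnk).symm
          · exact ((cellA x _ (x.length-k-2) (by omega) (by omega)).trans f3).trans
              ((cellA x _ (x.length-k+1) hlt (by omega)).trans (hg.trans (by rw [h]))).symm
        · refine sq_contra hsf (k+1) (x.length+2-k) (by omega) (by rw [wlen]; omega) ?_
          intro s hs
          rcases (show s ≤ x.length-k-1 ∨ s = x.length-k ∨ s = x.length-k+1 from by omega)
            with hs'|hs'|hs'
          · have e := hshift (s+1) (by omega) (by omega)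
            rw [show s+1-1 = s from by omega, show s+1+k-1 = k+s from by omega] at e
            exact ((cellA x _ (k+s) (by omega) (by omega)).trans e.symm).trans
              ((cellB x _ s (by omega) (by omega)).symm)
          · exact (cellS1 x _ (by omega)).trans
              (((cellB x _ (x.length-k) (by omega) (by omega)).trans hnk).symm)
          · exact (cellS2 x _ (by omega)).trans
              (((cellB x _ (x.length-k+1) hlt (by omega)).trans (hg.trans (by rw [h]))).symm)

theorem per_eq (hx : x ≠ []) (hsf : SqFree (wx x)) : per (wx x) = 4*x.length+4 := by
  have hmem : (4*x.length+4) ∈ {q | HasPeriod (wx x) q} := hasPeriod_main hx hsf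
  have hub : per (wx x) ≤ 4*x.length+4 := Nat.sInf_le hmem
  have hmem2 : HasPeriod (wx x) (per (wx x)) := Nat.sInf_mem ⟨_, hmem⟩
  by_contra hne2
  exact noPeriod hx hsf (per (wx x)) hmem2.1 (by omega) hmem2

end Period

section Occ
variable {x : Word}

theorem xocc (hx : x ≠ []) (hsf : SqFree (wx x)) (t : ℕ)
    (h : ∀ j, j < x.length → (wx x)[t+j]? = x[j]?) :
    t = 1 ∨ t = x.length+3 ∨ t = 2*x.length+5 ∨ t = 3*x.length+7 := by
  have h9 := nine hx hsf
  have hub : t ≤ 3*x.length+8 := by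
    by_contra hcon
    have e := h (x.length-1) (by omega)
    rw [List.getElem?_eq_none (by rw [wlen]; omega)] at e
    rw [List.getElem?_eq_getElem (show x.length-1 < x.length by omega)] at e
    exact Option.some_ne_none _ e.symm
  rcases (show t = 1 ∨ t = x.length+3 ∨ t = 2*x.length+5 ∨ t = 3*x.length+7 ∨
      t = 0 ∨ (2 ≤ t ∧ t ≤ x.length+1) ∨ t = x.length+2 ∨
      (x.length+4 ≤ t ∧ t ≤ 2*x.length+3) ∨ t = 2*x.length+4 ∨
      (2*x.length+6 ≤ t ∧ t ≤ 3*x.length+5) ∨ t = 3*x.length+6 ∨ t = 3*x.length+8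
      from by omega) with
    h'|h'|h'|h'|h'|⟨ha,hb⟩|h'|⟨ha,hb⟩|h'|⟨ha,hb⟩|h'|h'
  · exact Or.inl h'
  · exact Or.inr (Or.inl h')
  · exact Or.inr (Or.inr (Or.inl h'))
  · exact Or.inr (Or.inr (Or.inr h'))
  · exfalso
    refine sq_contra hsf t (1-t) (by omega) (by rw [wlen]; omega) ?_
    intro s hs
    rw [show t+(1-t)+s = 1+s from by omega]
    exact (h s (by omega)).trans (cellA x _ s (by omega) (by omega)).symm
  · exfalso
    refine sq_contra hsf 1 (t-1) (by omega) (by rw [wlen]; omega) ?_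
    intro s hs
    rw [show 1+(t-1)+s = t+s from by omega]
    exact (cellA x _ s (by omega) (by omega)).trans (h s (by omega)).symm
  · exfalso
    refine sq_contra hsf t (x.length+3-t) (by omega) (by rw [wlen]; omega) ?_
    intro s hs
    rw [show t+(x.length+3-t)+s = x.length+3+s from by omega]
    exact (h s (by omega)).trans (cellB x _ s (by omega) (by omega)).symm
  · exfalso
    refine sq_contra hsf (x.length+3) (t-(x.length+3)) (by omega) (by rw [wlen]; omega) ?_
    intro s hs
    rw [show x.length+3+(t-(x.length+3))+s = t+s from by omega]
    exact (cellB x _ s (by omega) (by omega)).trans (h s (by omega)).symm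
  · exfalso
    refine sq_contra hsf t (2*x.length+5-t) (by omega) (by rw [wlen]; omega) ?_
    intro s hs
    rw [show t+(2*x.length+5-t)+s = 2*x.length+5+s from by omega]
    exact (h s (by omega)).trans (cellC x _ s (by omega) (by omega)).symm
  · exfalso
    refine sq_contra hsf (2*x.length+5) (t-(2*x.length+5)) (by omega) (by rw [wlen]; omega) ?_
    intro s hs
    rw [show 2*x.length+5+(t-(2*x.length+5))+s = t+s from by omega]
    exact (cellC x _ s (by omega) (by omega)).trans (h s (by omega)).symm
  · exfalso
    refine sq_contra hsf t (3*x.length+7-t) (by omega) (by rw [wlen]; omega) ?_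
    intro s hs
    rw [show t+(3*x.length+7-t)+s = 3*x.length+7+s from by omega]
    exact (h s (by omega)).trans (cellD x _ s (by omega) (by omega)).symm
  · exfalso
    refine sq_contra hsf (3*x.length+7) (t-(3*x.length+7)) (by omega) (by rw [wlen]; omega) ?_
    intro s hs
    rw [show 3*x.length+7+(t-(3*x.length+7))+s = t+s from by omega]
    exact (cellD x _ s (by omega) (by omega)).trans (h s (by omega)).symm

theorem factF (hx : x ≠ []) (hsf : SqFree (wx x)) (s c : ℕ) (hs : 1 ≤ s)
    (hc1 : x.length+2 ≤ c) (hc2 : c ≤ 2*x.length+4) (hb : s + 2*c ≤ 4*x.length+7)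
    (h : ∀ j, j < c → (wx x)[s+j]? = (wx x)[(4*x.length+8-c)+j]?) : False := by
  have h9 := nine hx hsf
  by_cases hcc : c = x.length+2
  · -- suffix = 2 x 0, x at s+1
    have hocc : ∀ j, j < x.length → (wx x)[(s+1)+j]? = x[j]? := by
      intro j hj
      have e := h (j+1) (by omega)
      rw [show s+(j+1) = s+1+j from by omega] at e
      rw [cellD x (4*x.length+8-c+(j+1)) j (by omega) (by omega)] at e
      exact e
    rcases xocc hx hsf (s+1) hocc with h'|h'|h'|h'
    · omega
    · have e := h (c-1) (by omega)
      rw [show s+(c-1) = 2*x.length+3 from by omega, cellS3 x _ (by omega),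
        cellS7 x (4*x.length+8-c+(c-1)) (by omega)] at e
      exact optabs e (by decide)
    · have e := h 0 (by omega)
      rw [show s+0 = 2*x.length+4 from by omega, cellS4 x _ (by omega),
        cellS6 x (4*x.length+8-c+0) (by omega)] at e
      exact optabs e (by decide)
    · omega
  · -- c ≥ n+3: r = c-n-3, x at s+r+2
    have hr : x.length+3 ≤ c := by omega
    have hocc : ∀ j, j < x.length → (wx x)[(s+(c-x.length-3)+2)+j]? = x[j]? := by
      intro j hj
      have e := h ((c-x.length-3)+2+j) (by omega)
      rw [show s+((c-x.length-3)+2+j) = s+(c-x.length-3)+2+j from by omega] at e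
      rw [cellD x (4*x.length+8-c+((c-x.length-3)+2+j)) j (by omega) (by omega)] at e
      exact e
    rcases xocc hx hsf (s+(c-x.length-3)+2) hocc with h'|h'|h'|h'
    · omega
    · have e := h (c-1) (by omega)
      rw [show s+(c-1) = 2*x.length+3 from by omega, cellS3 x _ (by omega),
        cellS7 x (4*x.length+8-c+(c-1)) (by omega)] at e
      exact optabs e (by decide)
    · have e := h (c-x.length-3) (by omega)
      rw [show s+(c-x.length-3) = 2*x.length+3 from by omega, cellS3 x _ (by omega),
        cellS5 x (4*x.length+8-c+(c-x.length-3)) (by omega)] at e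
      exact optabs e (by decide)
    · omega

theorem pref_get {α} {u l : List α} (h : u <+: l) (j : ℕ) (hj : j < u.length) :
    u[j]? = l[j]? := by
  obtain ⟨t, ht⟩ := h
  rw [← ht, List.getElem?_append_left hj]

theorem suff_get {α} {u l : List α} (h : u <:+ l) (j : ℕ) (hj : j < u.length) :
    u[j]? = l[(l.length - u.length)+j]? := by
  obtain ⟨t, ht⟩ := h
  rw [← ht, peel t j (by simp only [List.length_append]; omega)]

end Occ

section Crit
variable {x : Word}

theorem crit_lb (hx : x ≠ []) (hsf : SqFree (wx x)) (p : ℕ) (hp1 : 2*x.length+4 ≤ p)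
    (hp2 : p ≤ 3*x.length+6) (u : Word) (hu : IsRepWord (wx x) p u) :
    4*x.length+4 ≤ u.length := by
  have h9 := nine hx hsf
  obtain ⟨hne, hA, hB⟩ := hu
  by_contra hcon
  push_neg at hcon
  have hm0 : 0 < u.length := List.length_pos_iff.mpr hne
  have htp : ((wx x).take p).length = p := by
    simp only [List.length_take, wlen]; omega
  have hdp : ((wx x).drop p).length = 4*x.length+8-p := by
    simp only [List.length_drop, wlen]
  rcases hA with hA|hA
  · have hmp : u.length ≤ p := by have := hA.length_le; omega
    rcases hB with hB|hB
    · -- A1 B1 : square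
      have hmy : u.length ≤ 4*x.length+8-p := by have := hB.length_le; omega
      refine sq_contra hsf (p-u.length) u.length hm0 (by rw [wlen]; omega) ?_
      intro s hs
      have e1 := suff_get hA s hs
      rw [htp, getElem?_take' _ (by omega)] at e1
      have e2 := pref_get hB s hs
      rw [List.getElem?_drop] at e2
      rw [show p-u.length+u.length+s = p+s from by omega]
      exact e1.symm.trans e2
    · -- A1 B2
      have hcy : 4*x.length+8-p ≤ u.length := by have := hB.length_le; omega
      have base : ∀ j, j < 4*x.length+8-p →
          (wx x)[p+j]? = (wx x)[(p-u.length)+j]? := by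
        intro j hj
        have e2 := pref_get hB j (by omega)
        rw [List.getElem?_drop] at e2
        have e1 := suff_get hA j (by omega)
        rw [htp, getElem?_take' _ (by omega)] at e1
        exact e2.trans e1
      rcases eq_or_lt_of_le hcy with heq|hlt2
      · refine sq_contra hsf (p-u.length) u.length hm0 (by rw [wlen]; omega) ?_
        intro s hs
        rw [show p-u.length+u.length+s = p+s from by omega]
        exact (base s (by omega)).symm
      · by_cases hs0 : p = u.length
        · refine noPeriod hx hsf p (by omega) (by omega) ⟨by omega, ?_⟩
          intro i hi
          rw [wlen] at hi
          have e := base i (by omega)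
          rw [show p-u.length+i = i from by omega] at e
          rw [show i+p = p+i from by omega]
          exact e.symm
        · refine factF hx hsf (p-u.length) (4*x.length+8-p) (by omega) (by omega)
            (by omega) (by omega) ?_
          intro j hj
          have e := base j hj
          rw [show 4*x.length+8-(4*x.length+8-p)+j = p+j from by omega]
          exact e.symm
  · have h1 : p ≤ u.length := by have := hA.length_le; omega
    rcases hB with hB|hB
    · -- A2 B1 : p = m = 2n+4
      have h2 : u.length ≤ 4*x.length+8-p := by have := hB.length_le; omega
      have hu1 : (wx x).take p = u := hA.eq_of_length (by omega)
      have hu2 : u = (wx x).drop p := hB.eq_of_length (by omega)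
      refine hsf u hne ⟨[], [], ?_⟩
      simp only [List.append_nil, List.nil_append]
      rw [← List.take_append_drop p (wx x), hu1, ← hu2]
    · -- A2 B2 : full period u.length
      refine noPeriod hx hsf u.length hm0 (by omega) ⟨hm0, ?_⟩
      intro i hi
      rw [wlen] at hi
      have ei1 := suff_get hA i (by omega)
      rw [htp] at ei1
      rw [getElem?_take' (l := wx x) (show i < p from by omega)] at ei1
      have ei2 := pref_get hB (u.length-p+i) (by omega)
      rw [List.getElem?_drop] at ei2
      rw [show i+u.length = p+(u.length-p+i) from by omega]
      exact ei1.trans ei2.symm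

theorem repword_exists (hx : x ≠ []) (hsf : SqFree (wx x)) (p : ℕ) (hp1 : 4 ≤ p)
    (hp2 : p ≤ 4*x.length+4) :
    ∃ u, IsRepWord (wx x) p u ∧ u.length = 4*x.length+4 := by
  have h9 := nine hx hsf
  have htp : ((wx x).take p).length = p := by
    simp only [List.length_take, wlen]; omega
  have h4 : (wx x).take 4 = (wx x).drop (4*x.length+4) := by
    apply List.ext_getElem?
    intro i
    by_cases hi : i < 4
    · rw [getElem?_take' _ hi, List.getElem?_drop]
      interval_cases i
      · exact (cell0 x _ (by omega)).trans
          ((cellD x _ (x.length-3) (by omega) (by omega)).trans (xl3 hsf (by omega))).symm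
      · exact ((cellA x _ 0 (by omega) (by omega)).trans (x0 hsf (by omega))).trans
          ((cellD x _ (x.length-2) (by omega) (by omega)).trans (xl2 hsf (by omega))).symm
      · exact ((cellA x _ 1 (by omega) (by omega)).trans (x1 hsf (by omega))).trans
          ((cellD x _ (x.length-1) (by omega) (by omega)).trans (xl1 hsf (by omega))).symm
      · exact ((cellA x _ 2 (by omega) (by omega)).trans (x2 hsf (by omega))).trans
          (cellS7 x _ (by omega)).symm
    · rw [List.getElem?_eq_none, List.getElem?_eq_none] <;>
        simp only [List.length_take, List.length_drop, wlen] <;> omega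
  refine ⟨(wx x).drop p ++ ((wx x).take p).drop 4, ⟨?_, Or.inr ?_, Or.inr ⟨_, rfl⟩⟩, ?_⟩
  · intro hh
    have := congrArg List.length hh
    simp only [List.length_append, List.length_drop, List.length_take, wlen,
      List.length_nil] at this
    omega
  · -- take p <:+ drop p ++ (take p).drop 4
    have hsub : (wx x).take 4 <:+ (wx x).drop p := by
      rw [h4, show (4*x.length+4) = p + (4*x.length+4-p) from by omega, ← List.drop_drop]
      exact List.drop_suffix _ _
    obtain ⟨v, hv⟩ := hsub
    refine ⟨v, ?_⟩
    have hsplit : (wx x).take p = (wx x).take 4 ++ ((wx x).take p).drop 4 := by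
      have h44 : ((wx x).take p).take 4 = (wx x).take 4 := by
        rw [List.take_take]; congr 1; omega
      rw [← h44, List.take_append_drop]
    conv_lhs => rw [hsplit]
    rw [← List.append_assoc, hv]
  · simp only [List.length_append, List.length_drop, List.length_take, wlen]
    omega

theorem locPer_crit (hx : x ≠ []) (hsf : SqFree (wx x)) (p : ℕ) (hp1 : 2*x.length+4 ≤ p)
    (hp2 : p ≤ 3*x.length+6) : locPer (wx x) p = 4*x.length+4 := by
  have h9 := nine hx hsf
  obtain ⟨u, hu, hlen⟩ := repword_exists hx hsf p (by omega) (by omega)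
  have hmem : (4*x.length+4) ∈ {m | ∃ u, IsRepWord (wx x) p u ∧ u.length = m} := ⟨u, hu, hlen⟩
  have h1 : locPer (wx x) p ≤ 4*x.length+4 := Nat.sInf_le hmem
  obtain ⟨u', hu', hlen'⟩ := Nat.sInf_mem (show Set.Nonempty {m | ∃ u, IsRepWord (wx x) p u ∧
    u.length = m} from ⟨_, hmem⟩)
  have h2 := crit_lb hx hsf p hp1 hp2 u' hu'
  have : locPer (wx x) p = sInf {m | ∃ u, IsRepWord (wx x) p u ∧ u.length = m} := rfl
  omega

theorem loc_low (hx : x ≠ []) (hsf : SqFree (wx x)) (p : ℕ) (hp1 : 1 ≤ p)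
    (hp2 : p ≤ 2*x.length+3) :
    ∃ u, IsRepWord (wx x) p u ∧ u.length = 2*x.length+4 := by
  have h9 := nine hx hsf
  refine ⟨((wx x).drop p).take (2*x.length+4), ⟨?_, Or.inr ?_, Or.inl (List.take_prefix _ _)⟩, ?_⟩
  · intro hh
    have := congrArg List.length hh
    simp only [List.length_take, List.length_drop, wlen, List.length_nil] at this
    omega
  · -- take p <:+ u
    have hdd : (((wx x).drop p).take (2*x.length+4)).drop (2*x.length+4-p) = (wx x).take p := by
      apply List.ext_getElem?
      intro i
      by_cases hi : i < p
      · rw [List.getElem?_drop, getElem?_take' _ (by omega), List.getElem?_drop,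
          getElem?_take' _ hi]
        rw [show p+(2*x.length+4-p+i) = 2*x.length+4+i from by omega]
        exact S1 x _ i (by omega) (by omega)
      · rw [List.getElem?_eq_none, List.getElem?_eq_none] <;>
          simp only [List.length_take, List.length_drop, wlen] <;> omega
    exact ⟨(((wx x).drop p).take (2*x.length+4)).take (2*x.length+4-p),
      by rw [← hdd, List.take_append_drop]⟩
  · simp only [List.length_take, List.length_drop, wlen]; omega

theorem loc_high (hx : x ≠ []) (hsf : SqFree (wx x)) (p : ℕ) (hp1 : 3*x.length+7 ≤ p)
    (hp2 : p ≤ 4*x.length+7) :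
    ∃ u, IsRepWord (wx x) p u ∧ u.length = x.length+2 := by
  have h9 := nine hx hsf
  have htp : ((wx x).take p).length = p := by
    simp only [List.length_take, wlen]; omega
  refine ⟨((wx x).take p).drop (p-(x.length+2)), ⟨?_, Or.inl (List.drop_suffix _ _), Or.inr ?_⟩, ?_⟩
  · intro hh
    have := congrArg List.length hh
    simp only [List.length_drop, List.length_take, wlen, List.length_nil] at this
    omega
  · -- drop p <+: u
    have e : (((wx x).take p).drop (p-(x.length+2))).take (4*x.length+8-p) = (wx x).drop p := by
      apply List.ext_getElem?
      intro i
      by_cases hi : i < 4*x.length+8-p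
      · rw [getElem?_take' _ hi, List.getElem?_drop, getElem?_take' _ (by omega),
          List.getElem?_drop]
        have := S2 x (p-(x.length+2)+i+(x.length+2)) (p-(x.length+2)+i) (by omega) (by omega)
          (by omega)
        rw [show p-(x.length+2)+i+(x.length+2) = p+i from by omega] at this
        exact this
      · rw [List.getElem?_eq_none, List.getElem?_eq_none] <;>
          simp only [List.length_take, List.length_drop, wlen] <;> omega
    exact ⟨(((wx x).take p).drop (p-(x.length+2))).drop (4*x.length+8-p),
      by rw [← e, List.take_append_drop]⟩
  · simp only [List.length_drop, List.length_take, wlen]; omega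

theorem locPer_le (p L : ℕ) (h : ∃ u, IsRepWord (wx x) p u ∧ u.length = L) :
    locPer (wx x) p ≤ L :=
  Nat.sInf_le h

end Crit

end WxP

/-- if `x` is nonempty and `w_x = 0x02x10x02x0` is square-free, then the
critical points of `w_x` are exactly the positions `2|x|+4 ≤ p ≤ 3|x|+6`, so
`η(w_x) = |x| + 3` and `η(w_x)/|w_x| = (|x|+3)/(4|x|+8) = 1/4 + 1/|w_x|`. -/
theorem wx_critical_points (x : CritFact.Word) (hx : x ≠ [])
    (hsf : CritFact.SqFree (CritFact.wx x)) :
    (∀ p : ℕ, CritFact.IsPos (CritFact.wx x) p →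
      (CritFact.IsCritical (CritFact.wx x) p ↔
        2 * x.length + 4 ≤ p ∧ p ≤ 3 * x.length + 6)) ∧
    CritFact.eta (CritFact.wx x) = x.length + 3 ∧
    (CritFact.eta (CritFact.wx x) : ℝ) / ((CritFact.wx x).length : ℝ)
      = ((x.length : ℝ) + 3) / (4 * (x.length : ℝ) + 8) ∧
    (CritFact.eta (CritFact.wx x) : ℝ) / ((CritFact.wx x).length : ℝ)
      = 1 / 4 + 1 / ((CritFact.wx x).length : ℝ) := by
  have h9 := WxP.nine hx hsf
  have hper := WxP.per_eq hx hsf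
  have hwl := WxP.wlen x
  have part1 : ∀ p : ℕ, CritFact.IsPos (CritFact.wx x) p →
      (CritFact.IsCritical (CritFact.wx x) p ↔
        2 * x.length + 4 ≤ p ∧ p ≤ 3 * x.length + 6) := by
    intro p hp
    obtain ⟨hp1, hp2⟩ := hp
    rw [hwl] at hp2
    constructor
    · intro hc
      by_contra hcon
      have hcon2 : p ≤ 2*x.length+3 ∨ 3*x.length+7 ≤ p := by omega
      have hloc := hc.2
      rw [hper] at hloc
      rcases hcon2 with h|h
      · have := WxP.locPer_le p (2*x.length+4) (WxP.loc_low hx hsf p (by omega) h)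
        omega
      · have := WxP.locPer_le p (x.length+2) (WxP.loc_high hx hsf p h (by omega))
        omega
    · intro h
      obtain ⟨h1, h2⟩ := h
      exact ⟨⟨hp1, by rw [hwl]; omega⟩, (WxP.locPer_crit hx hsf p h1 h2).trans hper.symm⟩
  have part2 : CritFact.eta (CritFact.wx x) = x.length + 3 := by
    unfold CritFact.eta
    have hfil : ∀ inst : DecidablePred fun p => CritFact.IsCritical (CritFact.wx x) p,
        (@Finset.filter _ (fun p => CritFact.IsCritical (CritFact.wx x) p) inst
          (Finset.Ico 1 (CritFact.wx x).length)) =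
        Finset.Ico (2*x.length+4) (3*x.length+7) := by
      intro inst
      ext p
      simp only [Finset.mem_filter, Finset.mem_Ico]
      constructor
      · rintro ⟨⟨ha, hb⟩, hc⟩
        have := (part1 p ⟨ha, hb⟩).mp hc
        omega
      · intro h
        obtain ⟨ha, hb⟩ := h
        have hpos : CritFact.IsPos (CritFact.wx x) p := ⟨by omega, by rw [hwl]; omega⟩
        exact ⟨⟨by omega, by rw [hwl]; omega⟩, (part1 p hpos).mpr ⟨by omega, by omega⟩⟩
    rw [hfil, Nat.card_Ico]
    omega
  refine ⟨part1, part2, ?_, ?_⟩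
  · rw [part2, hwl]
    push_cast
    ring
  · rw [part2, hwl]
    have hne : (4*(x.length:ℝ)+8) ≠ 0 := by positivity
    push_cast
    rw [div_add_div _ _ (by norm_num) hne, div_eq_div_iff hne (by positivity)]
    ring
end

section
/- For every n ≥ 1, the word mₙ = τ^{2n−1}(0)·τ^{2n−3}(0)⋯τ³(0)·τ(0) has length |mₙ| = 4ⁿ − 1, and mₙ·0 is a prefix of the infinite word m; in particular each mₙ is square-free. -/
namespace Scratch


def tm (n : ℕ) : Bool :=
  if h : n = 0 then false
  else if n % 2 = 0 then tm (n / 2) else !tm (n / 2)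
decreasing_by all_goals exact Nat.div_lt_self (Nat.pos_of_ne_zero h) one_lt_two

lemma tm_zero : tm 0 = false := by simp [tm]

lemma tm_two_mul (n : ℕ) : tm (2 * n) = tm n := by
  rcases Nat.eq_zero_or_pos n with h | h
  · simp [h]
  · rw [tm]
    simp only [(by omega : ¬ 2 * n = 0), if_neg, dite_eq_ite, ite_false,
      Nat.mul_mod_right, Nat.mul_div_cancel_left _ (by norm_num : 0 < 2)]
    simp
    intro _; omega

lemma tm_two_mul_add_one (n : ℕ) : tm (2 * n + 1) = !tm n := by
  rw [tm]
  simp [(by omega : ¬ 2 * n + 1 = 0), Nat.mul_add_mod,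
    (by omega : (2 * n + 1) / 2 = n)]

lemma tm_one : tm 1 = true := by
  have := tm_two_mul_add_one 0
  simpa [tm_zero] using this

lemma tm_no_three (n : ℕ) : ¬ (tm n = tm (n + 1) ∧ tm (n + 1) = tm (n + 2)) := by
  rcases Nat.even_or_odd n with ⟨m, hm⟩ | ⟨m, hm⟩
  · subst hm
    rw [(by omega : m + m = 2 * m)]
    rw [tm_two_mul, tm_two_mul_add_one]
    rintro ⟨h1, -⟩
    cases tm m <;> simp_all
  · subst hm
    rw [(by omega : 2 * m + 1 + 1 = 2 * (m + 1)), (by omega : 2 * m + 1 + 2 = 2 * (m + 1) + 1)]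
    rw [tm_two_mul, tm_two_mul_add_one (m + 1)]
    rintro ⟨-, h2⟩
    cases tm (m + 1) <;> simp_all


lemma tm_no_period : ∀ p, 0 < p → ∀ i, ¬ ∀ j ≤ p, tm (i + j) = tm (i + j + p) := by
  intro p
  induction p using Nat.strong_induction_on with
  | _ p IH =>
  intro hp i H
  rcases Nat.even_or_odd p with ⟨q, hq⟩ | ⟨r, hr⟩
  · -- p = q + q
    have hq1 : 0 < q := by omega
    apply IH q (by omega) hq1 (i / 2)
    intro j hj
    have h2 := H (2 * j) (by omega)
    rcases Nat.even_or_odd i with ⟨m, hm⟩ | ⟨m, hm⟩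
    · have hi2 : i / 2 = m := by omega
      rw [(by omega : i + 2 * j + p = 2 * (m + j + q)),
          (by omega : i + 2 * j = 2 * (m + j)), tm_two_mul, tm_two_mul] at h2
      rw [hi2, (by omega : m + j + q = m + j + q)]
      exact h2
    · have hi2 : i / 2 = m := by omega
      rw [(by omega : i + 2 * j + p = 2 * (m + j + q) + 1),
          (by omega : i + 2 * j = 2 * (m + j) + 1),
          tm_two_mul_add_one, tm_two_mul_add_one] at h2
      rw [hi2]
      cases h3 : tm (m + j) <;> cases h4 : tm (m + j + q) <;> simp_all
  · -- p = 2r+1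
    rcases Nat.eq_zero_or_pos r with hr0 | hr1
    · subst hr0
      apply tm_no_three i
      constructor
      · have := H 0 (by omega); simpa [hr] using this
      · have := H 1 (by omega); rw [(by omega : i + 1 + p = i + 2)] at this; simpa using this
    · have E : ∀ m, i ≤ 2 * m → 2 * m ≤ i + p → tm m = !tm (m + r) := by
        intro m h1 h2
        have h3 := H (2 * m - i) (by omega)
        rw [(by omega : i + (2 * m - i) + p = 2 * (m + r) + 1),
            (by omega : i + (2 * m - i) = 2 * m),
            tm_two_mul, tm_two_mul_add_one] at h3
        exact h3
      have O : ∀ m, i ≤ 2 * m + 1 → 2 * m + 1 ≤ i + p → tm m = !tm (m + r + 1) := by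
        intro m h1 h2
        have h3 := H (2 * m + 1 - i) (by omega)
        rw [(by omega : i + (2 * m + 1 - i) + p = 2 * (m + r + 1)),
            (by omega : i + (2 * m + 1 - i) = 2 * m + 1),
            tm_two_mul_add_one, tm_two_mul] at h3
        clear H IH E
        cases h4 : tm m <;> cases h5 : tm (m + r + 1) <;> simp_all
      rcases Nat.even_or_odd i with ⟨a, ha⟩ | ⟨a, ha⟩
      · -- i = a + a
        have e0 := E a (by omega) (by omega)
        have o0 := O a (by omega) (by omega)
        have e1 := E (a + 1) (by omega) (by omega)
        have o1 := O (a + 1) (by omega) (by omega)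
        clear H IH E O
        apply tm_no_three (a + r)
        constructor
        · cases h3 : tm a <;> simp_all
        · rw [(by omega : a + r + 1 = a + 1 + r), (by omega : a + r + 2 = a + 1 + r + 1)]
          cases h3 : tm (a + 1) <;> simp_all
      · -- i = 2a+1
        have e0 := E (a + 1) (by omega) (by omega)
        have o0 := O a (by omega) (by omega)
        have e1 := E (a + 2) (by omega) (by omega)
        have o1 := O (a + 1) (by omega) (by omega)
        clear H IH E O
        apply tm_no_three a
        constructor
        · rw [(by omega : a + r + 1 = a + 1 + r)] at o0
          cases h3 : tm (a + 1 + r) <;> simp_all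
        · rw [(by omega : a + 1 + r + 1 = a + 2 + r)] at o1
          cases h3 : tm (a + 2 + r) <;> simp_all


end Scratch

namespace CritFact

open Scratch

def cd (n : ℕ) : Fin 3 :=
  if tm n = tm (n + 1) then 1 else if tm n then 2 else 0

def cw (N : ℕ) : Word := (List.range N).map cd

lemma tauW_nil : tauW [] = [] := rfl

lemma tauW_single (a : Fin 3) : tauW [a] = tau a := by simp [tauW]

lemma tauW_append (u v : Word) : tauW (u ++ v) = tauW u ++ tauW v := by
  simp [tauW]

lemma cw_succ (N : ℕ) : cw (N + 1) = cw N ++ [cd N] := by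
  simp [cw, List.range_succ]

lemma cw_length (N : ℕ) : (cw N).length = N := by simp [cw]

lemma cd_zero : cd 0 = 0 := by
  simp [cd, tm_zero, tm_one]

lemma tauW_cw (N : ℕ) : tauW (cw N) = cw (2 * N + if tm N then 1 else 0) := by
  induction N with
  | zero => simp [cw, tm_zero, tauW]
  | succ N ih =>
    rw [cw_succ, tauW_append, ih, tauW_single]
    have htm0 : tm (2 * N) = tm N := tm_two_mul N
    have htm1 : tm (2 * N + 1) = !tm N := tm_two_mul_add_one N
    have htm2 : tm (2 * N + 2) = tm (N + 1) := by
      rw [(by omega : 2 * N + 2 = 2 * (N + 1)), tm_two_mul]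
    have htm3 : tm (2 * N + 3) = !tm (N + 1) := by
      rw [(by omega : 2 * N + 3 = 2 * (N + 1) + 1), tm_two_mul_add_one]
    cases h1 : tm N <;> cases h2 : tm (N + 1) <;>
      simp only [Bool.false_eq_true, if_false, if_true, ite_false, ite_true, Nat.add_zero]
    · -- ff : cw (2N) ++ tau (cd N) = cw (2(N+1))
      have hcd : cd N = 1 := by simp [cd, h1, h2]
      have c0 : cd (2 * N) = 0 := by simp [cd, htm0, htm1, h1]
      have c1 : cd (2 * N + 1) = 2 := by
        rw [cd, htm1, (by omega : 2 * N + 1 + 1 = 2 * N + 2), htm2]; simp [h1, h2]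
      rw [(by omega : 2 * (N + 1) = (2 * N + 1) + 1), cw_succ, cw_succ, c0, c1, hcd]
      simp [tau]
    · -- ft : cw (2N) ++ tau (cd N) = cw (2(N+1)+1)
      have hcd : cd N = 0 := by simp [cd, h1, h2]
      have c0 : cd (2 * N) = 0 := by simp [cd, htm0, htm1, h1]
      have c1 : cd (2 * N + 1) = 1 := by
        rw [cd, htm1, (by omega : 2 * N + 1 + 1 = 2 * N + 2), htm2]; simp [h1, h2]
      have c2 : cd (2 * N + 2) = 2 := by
        rw [cd, htm2, (by omega : 2 * N + 2 + 1 = 2 * N + 3), htm3]; simp [h2]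
      rw [(by omega : 2 * (N + 1) + 1 = ((2 * N + 1) + 1) + 1), cw_succ, cw_succ, cw_succ,
        (by omega : 2 * N + 1 + 1 = 2 * N + 2), c0, c1, c2, hcd]
      simp [tau]
    · -- tf : cw (2N+1) ++ tau (cd N) = cw (2(N+1))
      have hcd : cd N = 2 := by simp [cd, h1, h2]
      have c1 : cd (2 * N + 1) = 1 := by
        rw [cd, htm1, (by omega : 2 * N + 1 + 1 = 2 * N + 2), htm2]; simp [h1, h2]
      conv_rhs => rw [(by omega : 2 * (N + 1) = (2 * N + 1) + 1), cw_succ, c1]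
      rw [hcd]
      simp [tau]
    · -- tt : cw (2N+1) ++ tau (cd N) = cw (2(N+1)+1)
      have hcd : cd N = 1 := by simp [cd, h1, h2]
      have c1 : cd (2 * N + 1) = 0 := by
        rw [cd, htm1, (by omega : 2 * N + 1 + 1 = 2 * N + 2), htm2]; simp [h1, h2]
      have c2 : cd (2 * N + 2) = 2 := by
        rw [cd, htm2, (by omega : 2 * N + 2 + 1 = 2 * N + 3), htm3]; simp [h2]
      conv_rhs => rw [(by omega : 2 * (N + 1) + 1 = ((2 * N + 1) + 1) + 1), cw_succ, cw_succ,
        (by omega : 2 * N + 1 + 1 = 2 * N + 2), c1, c2]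
      rw [hcd]
      simp [tau]

lemma iter_eq_cw : ∀ k, ∃ N, k < N ∧ tauW^[k] [0] = cw N := by
  intro k
  induction k with
  | zero =>
    refine ⟨1, by omega, ?_⟩
    rw [(by norm_num : (1 : ℕ) = 0 + 1), cw_succ, cd_zero]
    rfl
  | succ k ih =>
    obtain ⟨N, hN, hT⟩ := ih
    refine ⟨2 * N + if tm N then 1 else 0, by cases tm N <;> simp <;> omega, ?_⟩
    rw [Function.iterate_succ_apply', hT, tauW_cw]

lemma mInf_eq_cd (n : ℕ) : mInf n = cd n := by
  obtain ⟨N, hN, hT⟩ := iter_eq_cw (n + 1)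
  rw [mInf, hT]
  rw [List.getD_eq_getElem _ _ (by simp [cw]; omega)]
  simp [cw]

end CritFact
namespace CritFact

open Scratch

lemma mWord_succ_eq (n : ℕ) :
    mWord (n + 1) = tauW (tauW (mWord n)) ++ [0, 1, 2] := by
  induction n with
  | zero =>
    show tauW^[2 * 0 + 1] [0] ++ mWord 0 = _
    simp [mWord, tauW, tau]
  | succ n ih =>
    show tauW^[2 * (n + 1) + 1] [0] ++ mWord (n + 1) = _
    conv_rhs => rw [show mWord (n + 1) = tauW^[2 * n + 1] [0] ++ mWord n from rfl,
      tauW_append, tauW_append]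
    rw [ih, (by omega : 2 * (n + 1) + 1 = ((2 * n + 1) + 1) + 1),
      Function.iterate_succ_apply', Function.iterate_succ_apply']
    simp [List.append_assoc]

lemma tm_pow4 (n : ℕ) : tm (4 ^ n) = true := by
  induction n with
  | zero => simpa using tm_one
  | succ n ih =>
    rw [(by ring : 4 ^ (n + 1) = 2 * (2 * 4 ^ n)), tm_two_mul, tm_two_mul, ih]

lemma tauW_tauW_zero : tauW (tauW [0]) = [0, 1, 2, 0, 2, 1] := by decide

lemma mWord_prefix (n : ℕ) : mWord n ++ [0] = cw (4 ^ n) := by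
  induction n with
  | zero =>
    rw [pow_zero, (by norm_num : (1 : ℕ) = 0 + 1), cw_succ, cd_zero]
    rfl
  | succ n ih =>
    have h1 : tauW (tauW (mWord n ++ [0])) = cw (4 ^ (n + 1) + 2) := by
      rw [ih, tauW_cw, tm_pow4, if_pos rfl, tauW_cw]
      have ht : tm (2 * 4 ^ n + 1) = false := by
        rw [tm_two_mul_add_one, tm_pow4]; rfl
      rw [ht, if_neg (by simp)]
      congr 1
      ring
    have h2 : tauW (tauW (mWord n ++ [0]))
        = tauW (tauW (mWord n)) ++ [0, 1, 2, 0, 2, 1] := by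
      rw [tauW_append, tauW_append, tauW_tauW_zero]
    set A := tauW (tauW (mWord n)) with hA
    have h3 : (A ++ [0, 1, 2, 0]) ++ [2, 1]
        = cw (4 ^ (n + 1)) ++ [cd (4 ^ (n + 1)), cd (4 ^ (n + 1) + 1)] := by
      rw [List.append_assoc]
      show A ++ [0, 1, 2, 0, 2, 1] = _
      rw [← h2, h1, (by omega : 4 ^ (n + 1) + 2 = ((4 ^ (n + 1)) + 1) + 1),
        cw_succ, cw_succ, List.append_assoc]
      rfl
    have h4 := (List.append_inj' h3 rfl).1
    rw [mWord_succ_eq, List.append_assoc]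
    exact h4

lemma cd_eq_iff {a b : ℕ} (h : cd a = cd b) :
    ((if tm a then (1 : ℤ) else 0) - (if tm (a + 1) then 1 else 0))
      = ((if tm b then (1 : ℤ) else 0) - (if tm (b + 1) then 1 else 0)) := by
  rw [cd, cd] at h
  cases h1 : tm a <;> cases h2 : tm (a + 1) <;> cases h3 : tm b <;> cases h4 : tm (b + 1) <;>
    simp [h1, h2, h3, h4] at h ⊢

lemma sqfree_cw (N : ℕ) : SqFree (cw N) := by
  intro v hv hinf
  obtain ⟨s, t, h⟩ := hinf
  set L := v.length with hLdef
  have hL1 : 0 < L := List.length_pos_iff.mpr hv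
  set i := s.length with hidef
  have hlen : i + (L + L) + t.length = N := by
    have := congrArg List.length h
    simp [cw] at this
    omega
  have key : ∀ j, j < L + L → (v ++ v)[j]? = some (cd (i + j)) := by
    intro j hj
    have hidx : i + j < N := by omega
    have hthis := congrArg (fun l => l[i + j]?) h
    rw [List.getElem?_append_left (by simp [← hLdef, ← hidef]; omega : i + j < (s ++ (v ++ v)).length)] at hthis
    rw [List.getElem?_append_right (by omega : s.length ≤ i + j)] at hthis
    rw [(by omega : i + j - s.length = j)] at hthis
    rw [hthis]
    simp [cw, List.getElem?_range hidx]
  have P : ∀ j, j < L → cd (i + j) = cd (i + L + j) := by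
    intro j hj
    have e1 := key j (by omega)
    have e2 := key (L + j) (by omega)
    have g1 : (v ++ v)[j]? = v[j]? := by
      rw [List.getElem?_append_left (by omega : j < v.length)]
    have g2 : (v ++ v)[L + j]? = v[j]? := by
      rw [List.getElem?_append_right (by omega : v.length ≤ L + j)]
      congr 1
      omega
    rw [g1] at e1
    rw [g2] at e2
    rw [(by omega : i + L + j = i + (L + j))]
    have := e1.symm.trans e2
    exact Option.some_injective _ this
  set z : ℕ → ℤ := fun k => if tm k then 1 else 0 with hz
  have hD : ∀ j, j ≤ L → z (i + j) - z (i + L + j) = z i - z (i + L) := by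
    intro j hj
    induction j with
    | zero => simp
    | succ j ihj =>
      have hcd := cd_eq_iff (P j (by omega))
      have ihj' := ihj (by omega)
      rw [(by omega : i + (j + 1) = (i + j) + 1), (by omega : i + L + (j + 1) = (i + L + j) + 1)]
      have hz1 : z (i + j) - z (i + j + 1) = z (i + L + j) - z (i + L + j + 1) := hcd
      linarith
  have hz01 : ∀ k, z k = 0 ∨ z k = 1 := by
    intro k
    by_cases hk : tm k <;> simp [hz, hk]
  have hzi : z i = z (i + L) := by
    rcases hz01 i with h1 | h1 <;> rcases hz01 (i + L) with h2 | h2 <;>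
      rcases hz01 (i + L + L) with h3 | h3 <;> linarith [hD L le_rfl]
  have hper : ∀ j, j ≤ L → tm (i + j) = tm (i + j + L) := by
    intro j hj
    have h5 := hD j hj
    rw [← hzi] at h5
    have h6 : z (i + j) = z (i + j + L) := by
      rw [(by omega : i + j + L = i + L + j)]
      linarith
    by_cases ha : tm (i + j) <;> by_cases hb : tm (i + j + L) <;>
      simp [hz, ha, hb] at h6 ⊢
  exact tm_no_period L hL1 i hper

end CritFact



/-- for `n ≥ 1`, `|mₙ| = 4ⁿ - 1`, `mₙ·0` is a prefix of the infinite
word `m`, and `mₙ` is square-free. -/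
theorem mWord_length_prefix_squarefree (n : ℕ) (hn : 1 ≤ n) :
    (CritFact.mWord n).length = 4 ^ n - 1 ∧
    CritFact.mWord n ++ [0] = (List.range (4 ^ n)).map CritFact.mInf ∧
    CritFact.SqFree (CritFact.mWord n) := by
  have hpre := CritFact.mWord_prefix n
  refine ⟨?_, ?_, ?_⟩
  · have := congrArg List.length hpre
    simp [CritFact.cw_length, CritFact.cw] at this
    have h4 : 0 < 4 ^ n := Nat.pow_pos (by norm_num)
    omega
  · rw [hpre, CritFact.cw]
    exact List.map_congr_left fun x _ => (CritFact.mInf_eq_cd x).symm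
  · intro v hv hinf
    refine CritFact.sqfree_cw (4 ^ n) v hv (hinf.trans ⟨[], [0], ?_⟩)
    simpa using hpre
end
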